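/- arXiv:2303.06392 — 15 statements merged into one kernel-verified Lean document; each statement's English description precedes it below -/
import Mathlib

section
/- Let E be a real normed space and let K ⊆ E be a nontrivial cone with norm-base B_K. Then: (i) every continuous linear functional x* ∈ E* with sInf {x*(x) | x ∈ B_K} > 0 belongs to the algebraic interior cor K⁺ of the dual cone K⁺; (ii) cor K⁺ ⊆ K^#; (iii) K^# ⊆ K⁺; and (iv) K⁺ = {x* ∈ E* | sInf {x*(x) | x ∈ B_K} ≥ 0}. -/
open Set

variable {E : Type*} [NormedAddCommGroup E] [NormedSpace ℝ E]

/-- `K` is a cone: contains `0` and is closed under nonnegative scalar multiplication. -/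
def IsCone (K : Set E) : Prop :=
  (0 : E) ∈ K ∧ ∀ t : ℝ, 0 ≤ t → ∀ x ∈ K, t • x ∈ K

/-- A cone is nontrivial if it is neither `{0}` nor the whole space. -/
def IsNontrivialCone (K : Set E) : Prop :=
  IsCone K ∧ K ≠ {0} ∧ K ≠ Set.univ

/-- The norm-base of a cone: its intersection with the unit sphere. -/
def normBase (K : Set E) : Set E := {x ∈ K | ‖x‖ = 1}

/-- Closure of a set with respect to the weak topology `σ(E, E*)`. -/
noncomputable def wClosure (S : Set E) : Set E :=
  (toWeakSpace ℝ E).symm '' closure ((toWeakSpace ℝ E) '' S)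

/-- A set is weakly compact if it is compact in the weak topology `σ(E, E*)`. -/
def WeaklyCompact (S : Set E) : Prop :=
  IsCompact ((toWeakSpace ℝ E) '' S)

/-- A set is weakly closed if it equals its weak closure. -/
noncomputable def WeaklyClosed (S : Set E) : Prop :=
  wClosure S = S

/-- The (topological) dual cone `K⁺`. -/
def dualCone (K : Set E) : Set (E →L[ℝ] ℝ) :=
  {f | ∀ k ∈ K, 0 ≤ f k}

/-- The set `K^#` of functionals strictly positive on `K \ {0}`. -/
def sharpCone (K : Set E) : Set (E →L[ℝ] ℝ) :=
  {f | ∀ k ∈ K, k ≠ 0 → 0 < f k}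

/-- The set `K^{w#}` of functionals strictly positive on the weak closure of the norm-base. -/
noncomputable def wSharpCone (K : Set E) : Set (E →L[ℝ] ℝ) :=
  {f | ∀ x ∈ wClosure (normBase K), 0 < f x}

/-- The algebraic interior (core) of a set in a real vector space. -/
def core {X : Type*} [AddCommGroup X] [Module ℝ X] (Ω : Set X) : Set X :=
  {x ∈ Ω | ∀ v : X, ∃ ε > 0, ∀ t ∈ Set.Icc (0 : ℝ) ε, x + t • v ∈ Ω}

/-- The augmented dual cone `K^{a+}`. -/
def augDualCone (K : Set E) : Set ((E →L[ℝ] ℝ) × ℝ) :=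
  {p | 0 ≤ p.2 ∧ ∀ y ∈ K, 0 ≤ p.1 y - p.2 * ‖y‖}

/-- The set `K^{a#}`. -/
def augSharpCone (K : Set E) : Set ((E →L[ℝ] ℝ) × ℝ) :=
  {p | 0 ≤ p.2 ∧ p.1 ∈ sharpCone K ∧ ∀ y ∈ K, y ≠ 0 → 0 < p.1 y - p.2 * ‖y‖}

/-- The set `K^{aw#}`. -/
noncomputable def augWSharpCone (K : Set E) : Set ((E →L[ℝ] ℝ) × ℝ) :=
  {p | 0 ≤ p.2 ∧ p.1 ∈ sharpCone K ∧ ∀ y ∈ wClosure (normBase K), p.2 < p.1 y}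

/-- `S_C = conv(B_C)`. -/
noncomputable def convBase (C : Set E) : Set E := convexHull ℝ (normBase C)

/-- `S_C^0 = conv({0} ∪ B_C)`. -/
noncomputable def convBase0 (C : Set E) : Set E := convexHull ℝ ({0} ∪ normBase C)

theorem stmt0 (K : Set E) (hK : IsNontrivialCone K) :
    (∀ f : E →L[ℝ] ℝ, 0 < sInf ((fun x => f x) '' normBase K) → f ∈ core (dualCone K)) ∧
    core (dualCone K) ⊆ sharpCone K ∧
    sharpCone K ⊆ dualCone K ∧
    dualCone K = {f : E →L[ℝ] ℝ | 0 ≤ sInf ((fun x => f x) '' normBase K)} := by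
  obtain ⟨⟨h0, hcone⟩, hne, _⟩ := hK
  -- there is a nonzero element of K
  have hex : ∃ x ∈ K, x ≠ (0 : E) := by
    by_contra h
    push_neg at h
    apply hne
    ext y
    simp only [Set.mem_singleton_iff]
    exact ⟨fun hy => h y hy, fun hy => hy ▸ h0⟩
  obtain ⟨x0, hx0K, hx0⟩ := hex
  -- normBase is nonempty
  have hB : (normBase K).Nonempty := by
    refine ⟨‖x0‖⁻¹ • x0, hcone _ (by positivity) _ hx0K, ?_⟩
    rw [norm_smul, norm_inv, norm_norm, inv_mul_cancel₀ (norm_ne_zero_iff.mpr hx0)]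
  -- scaling
  have hscale : ∀ k ∈ K, k ≠ (0 : E) → ‖k‖⁻¹ • k ∈ normBase K := by
    intro k hk hk0
    refine ⟨hcone _ (by positivity) _ hk, ?_⟩
    rw [norm_smul, norm_inv, norm_norm, inv_mul_cancel₀ (norm_ne_zero_iff.mpr hk0)]
  have hbdd : ∀ f : E →L[ℝ] ℝ, BddBelow ((fun x => f x) '' normBase K) := by
    intro f
    refine ⟨-‖f‖, ?_⟩
    rintro t ⟨x, hx, rfl⟩
    have h1 : |f x| ≤ ‖f‖ * ‖x‖ := by
      calc |f x| = ‖f x‖ := (Real.norm_eq_abs _).symm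
      _ ≤ ‖f‖ * ‖x‖ := f.le_opNorm x
    rw [hx.2, mul_one] at h1
    linarith [abs_le.mp h1]
  have hle : ∀ (f : E →L[ℝ] ℝ) x, x ∈ normBase K →
      sInf ((fun x => f x) '' normBase K) ≤ f x := by
    intro f x hx
    exact csInf_le (hbdd f) ⟨x, hx, rfl⟩
  -- from lower bound on base to all of K
  have hlower : ∀ (f : E →L[ℝ] ℝ) (m : ℝ), (∀ x ∈ normBase K, m ≤ f x) →
      ∀ k ∈ K, k ≠ (0 : E) → m * ‖k‖ ≤ f k := by
    intro f m hm k hk hk0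
    have hkn : (0 : ℝ) < ‖k‖ := norm_pos_iff.mpr hk0
    have h1 : m ≤ f (‖k‖⁻¹ • k) := hm _ (hscale k hk hk0)
    rw [map_smul, smul_eq_mul] at h1
    calc m * ‖k‖ ≤ (‖k‖⁻¹ * f k) * ‖k‖ := by nlinarith
    _ = f k := by field_simp
  refine ⟨?_, ?_, ?_, ?_⟩
  · -- (i)
    intro f hf
    set m := sInf ((fun x => f x) '' normBase K) with hm
    have hfb : ∀ x ∈ normBase K, m ≤ f x := fun x hx => hle f x hx
    have hmem : ∀ (g : E →L[ℝ] ℝ), (∀ x ∈ normBase K, (0:ℝ) ≤ g x) → g ∈ dualCone K := by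
      intro g hg k hk
      rcases eq_or_ne k 0 with rfl | hk0
      · simp
      · have := hlower g 0 hg k hk hk0
        linarith [this]
    refine ⟨hmem f (fun x hx => le_trans hf.le (hfb x hx)), ?_⟩
    intro v
    refine ⟨m / (‖v‖ + 1), by positivity, ?_⟩
    intro t ht
    apply hmem
    intro x hx
    have hvx : |v x| ≤ ‖v‖ := by
      have h1 : ‖v x‖ ≤ ‖v‖ * ‖x‖ := v.le_opNorm x
      rw [hx.2, mul_one] at h1
      exact (Real.norm_eq_abs _) ▸ h1
    have h2 : m ≤ f x := hfb x hx
    have h3 : t * v x ≥ -(t * ‖v‖) := by nlinarith [abs_le.mp hvx, ht.1]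
    have h4 : t * ‖v‖ ≤ m := by
      have hv1 : (0:ℝ) < ‖v‖ + 1 := by positivity
      have := ht.2
      have h5 : t * ‖v‖ ≤ (m / (‖v‖ + 1)) * ‖v‖ := by nlinarith [norm_nonneg v, ht.1]
      have h6 : (m / (‖v‖ + 1)) * ‖v‖ ≤ m := by
        rw [div_mul_eq_mul_div, div_le_iff₀ hv1]
        nlinarith [norm_nonneg v]
      linarith
    simp only [ContinuousLinearMap.add_apply, ContinuousLinearMap.coe_smul', Pi.smul_apply,
      smul_eq_mul]
    linarith
  · -- (ii)
    rintro f ⟨hfK, hcore⟩ k hk hk0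
    obtain ⟨g, hg1, hgk⟩ := exists_dual_vector ℝ k (norm_ne_zero_iff.mpr hk0)
    obtain ⟨ε, hε, hεall⟩ := hcore (-g)
    have h1 := hεall ε ⟨hε.le, le_refl ε⟩ k hk
    simp only [ContinuousLinearMap.add_apply, ContinuousLinearMap.coe_smul', Pi.smul_apply,
      ContinuousLinearMap.neg_apply, smul_eq_mul] at h1
    have hgk' : g k = ‖k‖ := by
      have := hgk
      simp only [RCLike.ofReal_real_eq_id, id_eq] at this
      exact this
    rw [hgk'] at h1
    have : (0:ℝ) < ε * ‖k‖ := mul_pos hε (norm_pos_iff.mpr hk0)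
    linarith
  · -- (iii)
    intro f hf k hk
    rcases eq_or_ne k 0 with rfl | hk0
    · simp
    · exact (hf k hk hk0).le
  · -- (iv)
    ext f
    simp only [Set.mem_setOf_eq]
    constructor
    · intro hf
      apply le_csInf (hB.image _)
      rintro t ⟨x, hx, rfl⟩
      exact hf x hx.1
    · intro hf k hk
      rcases eq_or_ne k 0 with rfl | hk0
      · simp
      · have := hlower f _ (fun x hx => hle f x hx) k hk hk0
        have h2 : 0 ≤ sInf ((fun x => f x) '' normBase K) * ‖k‖ := by positivity
        linarith
end

section
/- Let E be a real normed space and let K ⊆ E be a nontrivial cone with norm-base B_K. If the weak closure cl_w B_K of B_K is weakly compact, then K^{w#} ⊆ cor K⁺, i.e., every x* ∈ E* with x*(x) > 0 for all x in the weak closure of B_K belongs to the algebraic interior of the dual cone K⁺. -/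
open Set

variable {E : Type*} [NormedAddCommGroup E] [NormedSpace ℝ E]

theorem stmt1 (K : Set E) (hK : IsNontrivialCone K)
    (hcomp : WeaklyCompact (wClosure (normBase K))) :
    wSharpCone K ⊆ core (dualCone K) := by
  intro f hf
  obtain ⟨⟨h0, hcone⟩, hne0, -⟩ := hK
  -- normBase is nonempty
  obtain ⟨x0, hx0K, hx0ne⟩ : ∃ x ∈ K, x ≠ 0 := by
    by_contra h
    push_neg at h
    exact hne0 (Set.eq_singleton_iff_unique_mem.mpr ⟨h0, fun x hx => h x hx⟩)
  have hbase : ∀ k ∈ K, k ≠ 0 → (‖k‖⁻¹ • k) ∈ normBase K := by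
    intro k hk hkne
    refine ⟨hcone _ (by positivity) _ hk, ?_⟩
    rw [norm_smul, norm_inv, norm_norm, inv_mul_cancel₀ (norm_ne_zero_iff.mpr hkne)]
  -- the compact set
  have himg : (toWeakSpace ℝ E) '' wClosure (normBase K)
      = closure ((toWeakSpace ℝ E) '' normBase K) := by
    unfold wClosure
    rw [Set.image_image]
    simp [Set.image_id']
  rw [WeaklyCompact, himg] at hcomp
  have hCne : (closure ((toWeakSpace ℝ E) '' normBase K)).Nonempty :=
    ⟨_, subset_closure (Set.mem_image_of_mem (toWeakSpace ℝ E) (hbase x0 hx0K hx0ne))⟩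
  have hg : Continuous fun x : WeakSpace ℝ E => f ((toWeakSpace ℝ E).symm x) :=
    WeakBilin.eval_continuous (topDualPairing ℝ E).flip f
  obtain ⟨a, haC, hamin⟩ := hcomp.exists_isMinOn hCne hg.continuousOn
  set δ := f ((toWeakSpace ℝ E).symm a) with hδ
  have haw : (toWeakSpace ℝ E).symm a ∈ wClosure (normBase K) :=
    ⟨a, himg ▸ haC, rfl⟩
  have hδpos : 0 < δ := hf _ haw
  have hlow : ∀ x ∈ normBase K, δ ≤ f x := by
    intro x hx
    have : (toWeakSpace ℝ E) x ∈ closure ((toWeakSpace ℝ E) '' normBase K) :=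
      subset_closure (Set.mem_image_of_mem _ hx)
    simpa using hamin this
  -- main estimate: f k ≥ δ * ‖k‖ for k ∈ K
  have hkey : ∀ g : E →L[ℝ] ℝ, (∀ x ∈ normBase K, 0 ≤ g x) → g ∈ dualCone K := by
    intro g hg k hk
    rcases eq_or_ne k 0 with rfl | hkne
    · simp
    · have := hg _ (hbase k hk hkne)
      have hfk : g (‖k‖⁻¹ • k) = ‖k‖⁻¹ * g k := by simp
      rw [hfk] at this
      have hnorm : (0:ℝ) < ‖k‖⁻¹ := by
        have := norm_pos_iff.mpr hkne; positivity
      nlinarith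
  constructor
  · exact hkey f (fun x hx => (lt_of_lt_of_le hδpos (hlow x hx)).le)
  · intro v
    refine ⟨δ / (‖v‖ + 1), by positivity, fun t ht => ?_⟩
    refine hkey (f + t • v) (fun x hx => ?_)
    have h1 : δ ≤ f x := hlow x hx
    have h2 : |v x| ≤ ‖v‖ := by
      calc |v x| ≤ ‖v‖ * ‖x‖ := v.le_opNorm x
        _ = ‖v‖ := by rw [hx.2, mul_one]
    have h3 : t * (‖v‖ + 1) ≤ δ := by
      rcases ht with ⟨ht0, ht1⟩
      calc t * (‖v‖ + 1) ≤ (δ / (‖v‖ + 1)) * (‖v‖ + 1) := by nlinarith [norm_nonneg v]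
        _ = δ := div_mul_cancel₀ _ (by positivity)
    have : (f + t • v) x = f x + t * v x := by simp
    rw [this]
    have habs := abs_le.mp h2
    nlinarith [ht.1]
end

section
/- Let E be a real normed space and let K ⊆ E be a nontrivial cone with norm-base B_K. If 0 does not belong to the weak closure cl_w B_K of B_K, then cor K⁺ ⊆ K^{w#}, i.e., every element of the algebraic interior of the dual cone K⁺ satisfies x*(x) > 0 for all x ∈ cl_w B_K. -/
open Set

variable {E : Type*} [NormedAddCommGroup E] [NormedSpace ℝ E]

lemma weak_cont {E : Type*} [NormedAddCommGroup E] [NormedSpace ℝ E] (f : E →L[ℝ] ℝ) :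
    Continuous fun x : WeakSpace ℝ E => f ((toWeakSpace ℝ E).symm x) :=
  WeakBilin.eval_continuous (topDualPairing ℝ E).flip f

lemma nonneg_on_wClosure {K : Set E} {f : E →L[ℝ] ℝ} (hf : f ∈ dualCone K)
    {x : E} (hx : x ∈ wClosure (normBase K)) : 0 ≤ f x := by
  obtain ⟨y, hy, rfl⟩ := hx
  have h1 : y ∈ closure {z : WeakSpace ℝ E | 0 ≤ f ((toWeakSpace ℝ E).symm z)} := by
    refine closure_mono ?_ hy
    rintro z ⟨w, hw, rfl⟩
    simpa using hf w hw.1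
  have hcl : IsClosed {z : WeakSpace ℝ E | 0 ≤ f ((toWeakSpace ℝ E).symm z)} :=
    isClosed_le continuous_const (weak_cont f)
  rwa [hcl.closure_eq] at h1

theorem stmt2 (K : Set E) (hK : IsNontrivialCone K)
    (h0 : (0 : E) ∉ wClosure (normBase K)) :
    core (dualCone K) ⊆ wSharpCone K := by
  intro f hf x hx
  rcases lt_or_eq_of_le (nonneg_on_wClosure hf.1 hx) with h | h
  · exact h
  exfalso
  have hxne : x ≠ 0 := fun hxeq => h0 (hxeq ▸ hx)
  obtain ⟨g, hg⟩ := SeparatingDual.exists_ne_zero (R := ℝ) hxne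
  wlog hgx : g x < 0 generalizing g
  · exact this (-g) (by simpa using hg)
      (by push_neg at hgx; simpa using lt_of_le_of_ne hgx (Ne.symm hg))
  obtain ⟨ε, hε, hmem⟩ := hf.2 g
  have hfg : f + ε • g ∈ dualCone K := by
    simpa using hmem ε ⟨le_of_lt hε, le_refl ε⟩
  have h2 := nonneg_on_wClosure hfg hx
  simp only [ContinuousLinearMap.add_apply, ContinuousLinearMap.smul_apply, ← h] at h2
  simp only [smul_eq_mul] at h2; nlinarith
end

section
/- Let E be a real normed space and let K ⊆ E be a nontrivial cone with norm-base B_K. If either (a) B_K is weakly compact, or (b) K is weakly closed, the weak closure cl_w B_K is weakly compact, and 0 ∉ cl_w B_K, then cor K⁺ = K^{w#} = K^#. -/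
open Set

variable {E : Type*} [NormedAddCommGroup E] [NormedSpace ℝ E]

lemma weakT2' : T2Space (WeakSpace ℝ E) := by
  have hinj : Function.Injective ((topDualPairing ℝ E).flip) := by
    intro x y hxy
    by_contra hne
    obtain ⟨g, -, hg⟩ := exists_dual_vector ℝ (x - y) (norm_ne_zero_iff.mpr (sub_ne_zero.mpr hne))
    have h2 : g x = g y := LinearMap.congr_fun hxy g
    have h3 : g (x - y) = 0 := by rw [map_sub, h2, sub_self]
    rw [hg] at h3
    simp only [RCLike.ofReal_eq_zero, norm_eq_zero, sub_eq_zero] at h3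
    exact hne h3
  exact (WeakBilin.isEmbedding hinj).t2Space

lemma subset_wClosure' (S : Set E) : S ⊆ wClosure S := by
  intro x hx
  exact ⟨toWeakSpace ℝ E x, subset_closure (mem_image_of_mem _ hx),
    (toWeakSpace ℝ E).symm_apply_apply x⟩

lemma mem_wClosure' {S : Set E} {x : E} :
    x ∈ wClosure S ↔ toWeakSpace ℝ E x ∈ closure ((toWeakSpace ℝ E) '' S) := by
  constructor
  · rintro ⟨y, hy, rfl⟩
    rwa [(toWeakSpace ℝ E).apply_symm_apply]
  · intro h
    exact ⟨_, h, (toWeakSpace ℝ E).symm_apply_apply x⟩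

theorem stmt3 (K : Set E) (hK : IsNontrivialCone K)
    (h : WeaklyCompact (normBase K) ∨
      (WeaklyClosed K ∧ WeaklyCompact (wClosure (normBase K)) ∧
        (0 : E) ∉ wClosure (normBase K))) :
    core (dualCone K) = wSharpCone K ∧ wSharpCone K = sharpCone K := by
  haveI : T2Space (WeakSpace ℝ E) := weakT2'
  obtain ⟨⟨h0K, hsmul⟩, hne0, -⟩ := hK
  -- normBase K is nonempty
  obtain ⟨x₀, hx₀K, hx₀0⟩ : ∃ x ∈ K, x ≠ 0 := by
    by_contra hcon
    push_neg at hcon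
    exact hne0 (Set.eq_singleton_iff_unique_mem.mpr ⟨h0K, fun y hy => hcon y hy⟩)
  have hbase : ∀ k ∈ K, k ≠ 0 → ‖k‖⁻¹ • k ∈ normBase K := by
    intro k hk hk0
    have hk' : (0:ℝ) < ‖k‖ := norm_pos_iff.mpr hk0
    refine ⟨hsmul _ (by positivity) k hk, ?_⟩
    rw [norm_smul, norm_inv, norm_norm]
    field_simp
  have hb : ‖x₀‖⁻¹ • x₀ ∈ normBase K := hbase x₀ hx₀K hx₀0
  set b := ‖x₀‖⁻¹ • x₀ with hbdef
  -- case (a): wClosure of normBase equals normBase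
  have hcase : wClosure (normBase K) ⊆ K \ {0} ∧
      IsCompact ((toWeakSpace ℝ E) '' wClosure (normBase K)) := by
    rcases h with ha | ⟨hcl, hcpt, h0⟩
    · have heq : wClosure (normBase K) = normBase K := by
        unfold wClosure
        rw [ha.isClosed.closure_eq, Set.image_image]
        simp [LinearEquiv.symm_apply_apply]
      rw [heq]
      constructor
      · rintro x ⟨hxK, hx1⟩
        refine ⟨hxK, fun h => ?_⟩
        rw [Set.mem_singleton_iff] at h
        rw [h, norm_zero] at hx1
        norm_num at hx1
      · exact ha
    · refine ⟨?_, hcpt⟩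
      intro x hx
      have hxK : x ∈ K := by
        rw [← hcl]
        rw [mem_wClosure'] at hx ⊢
        exact closure_mono (Set.image_mono fun y hy => hy.1) hx
      exact ⟨hxK, fun hx0 => h0 (hx0 ▸ hx)⟩
  obtain ⟨hWsub, hWcpt⟩ := hcase
  have hBW : normBase K ⊆ wClosure (normBase K) := subset_wClosure' _
  -- wSharp ⊆ sharp
  have wsharp_sub : wSharpCone K ⊆ sharpCone K := by
    intro f hf k hk hk0
    have hk' : (0:ℝ) < ‖k‖ := norm_pos_iff.mpr hk0
    have := hf _ (hBW (hbase k hk hk0))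
    rw [map_smul, smul_eq_mul] at this
    have hinv : (0:ℝ) < ‖k‖⁻¹ := inv_pos.mpr hk'
    nlinarith
  -- sharp ⊆ wSharp
  have sharp_sub : sharpCone K ⊆ wSharpCone K := fun f hf x hx =>
    hf x (hWsub hx).1 (hWsub hx).2
  have heq2 : wSharpCone K = sharpCone K := Set.Subset.antisymm wsharp_sub sharp_sub
  refine ⟨?_, heq2⟩
  apply Set.Subset.antisymm
  · -- core ⊆ wSharp
    rintro f ⟨hfK, hcore⟩ x hx
    obtain ⟨hxK, hx0⟩ := hWsub hx
    rcases (hfK x hxK).lt_or_eq with hlt | heq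
    · exact hlt
    · exfalso
      obtain ⟨g, -, hg⟩ := exists_dual_vector ℝ x (norm_ne_zero_iff.mpr hx0)
      obtain ⟨ε, hε, hmem⟩ := hcore (-g)
      have h1 := hmem ε ⟨le_of_lt hε, le_refl ε⟩ x hxK
      simp only [ContinuousLinearMap.add_apply, ContinuousLinearMap.smul_apply,
        ContinuousLinearMap.neg_apply, smul_eq_mul] at h1
      have hgx : g x = ‖x‖ := by exact_mod_cast hg
      have hxn : (0:ℝ) < ‖x‖ := norm_pos_iff.mpr hx0
      rw [hgx, ← heq] at h1
      nlinarith
  · -- wSharp ⊆ core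
    intro f hf
    have hfsharp : f ∈ sharpCone K := wsharp_sub hf
    have hfdual : f ∈ dualCone K := by
      intro k hk
      rcases eq_or_ne k 0 with rfl | h0
      · simp
      · exact (hfsharp k hk h0).le
    refine ⟨hfdual, fun v => ?_⟩
    set W' : Set (WeakSpace ℝ E) := (toWeakSpace ℝ E) '' wClosure (normBase K) with hW'
    have hW'ne : W'.Nonempty := ⟨_, mem_image_of_mem _ (hBW hb)⟩
    have hfc : Continuous fun x : WeakSpace ℝ E => f x := WeakBilin.eval_continuous _ f
    have hvc : Continuous fun x : WeakSpace ℝ E => |v x| :=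
      (WeakBilin.eval_continuous _ v).abs
    obtain ⟨z, hzW', hzmin⟩ := hWcpt.exists_isMinOn hW'ne hfc.continuousOn
    obtain ⟨m, hmW', hmmax⟩ := hWcpt.exists_isMaxOn hW'ne hvc.continuousOn
    set δ : ℝ := f z with hδ
    set M : ℝ := |v m| with hM
    have hδpos : 0 < δ := by
      obtain ⟨w, hw, rfl⟩ := hzW'
      exact hf w hw
    have hM0 : 0 ≤ M := abs_nonneg _
    have hεpos : 0 < δ / (M + 1) := by positivity
    refine ⟨δ / (M + 1), hεpos, ?_⟩
    intro t ht k hk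
    rcases eq_or_ne k 0 with rfl | h0
    · simp
    · have hk' : (0:ℝ) < ‖k‖ := norm_pos_iff.mpr h0
      have hw : ‖k‖⁻¹ • k ∈ wClosure (normBase K) := hBW (hbase k hk h0)
      set w : E := ‖k‖⁻¹ • k with hwdef
      have hδw : δ ≤ f w := hzmin (mem_image_of_mem _ hw)
      have hMw : |v w| ≤ M := hmmax (mem_image_of_mem _ hw)
      -- (f + t • v) w > 0
      have hpos : 0 ≤ f w + t * v w := by
        have h1 : t * v w ≥ -(t * M) := by
          have := neg_abs_le (v w)
          nlinarith [ht.1, abs_le.mp hMw]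
        have h2 : t * M ≤ (δ / (M + 1)) * M := by
          apply mul_le_mul_of_nonneg_right ht.2 hM0
        have h3 : (δ / (M + 1)) * M < δ := by
          rw [div_mul_eq_mul_div, div_lt_iff₀ (by linarith)]
          nlinarith
        linarith
      -- scale up
      have hfw : f w = ‖k‖⁻¹ * f k := by rw [hwdef, map_smul, smul_eq_mul]
      have hvw : v w = ‖k‖⁻¹ * v k := by rw [hwdef, map_smul, smul_eq_mul]
      simp only [ContinuousLinearMap.add_apply, ContinuousLinearMap.smul_apply, smul_eq_mul]
      rw [hfw, hvw] at hpos
      have := mul_nonneg (le_of_lt hk') hpos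
      have hkinv : ‖k‖ * ‖k‖⁻¹ = 1 := mul_inv_cancel₀ (ne_of_gt hk')
      nlinarith
end

section
/- Let E be a real normed space and let K, A ⊆ E be closed convex cones such that cl S_K (the norm closure of the convex hull of the norm-base of K) is weakly compact and 0 ∉ cl S_K. If A ∩ (−K) = {0}, then there exists a nonzero continuous linear functional x* ∈ E* such that x*(a) ≥ 0 for all a ∈ A and x*(k) < 0 for all k ∈ (−K) \ {0}. -/
open Set

variable {E : Type*} [NormedAddCommGroup E] [NormedSpace ℝ E]

instance : ContinuousSMul ℝ (WeakSpace ℝ E) := WeakBilin.instContinuousSMul _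
instance : LocallyConvexSpace ℝ (WeakSpace ℝ E) := WeakBilin.locallyConvexSpace

theorem stmt4 (K A : Set E) (hK : IsNontrivialCone K) (hA : IsCone A)
    (hKcl : IsClosed K) (hKcv : Convex ℝ K) (hAcl : IsClosed A) (hAcv : Convex ℝ A)
    (hcomp : WeaklyCompact (closure (convBase K)))
    (h0 : (0 : E) ∉ closure (convBase K))
    (hsep : A ∩ (-K) = {0}) :
    ∃ f : E →L[ℝ] ℝ, f ≠ 0 ∧ (∀ a ∈ A, 0 ≤ f a) ∧
      ∀ k ∈ (-K : Set E), k ≠ 0 → f k < 0 := by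
  obtain ⟨⟨hK0, hKsmul⟩, hKne, -⟩ := hK
  set S : Set E := closure (convBase K) with hSdef
  have hSK : S ⊆ K :=
    closure_minimal (convexHull_min (fun x hx => hx.1) hKcv) hKcl
  have hScv : Convex ℝ S := (convex_convexHull ℝ _).closure
  -- normBase elements in S
  have hBS : normBase K ⊆ S := subset_trans (subset_convexHull ℝ _) subset_closure
  have hnb : ∀ x ∈ K, x ≠ 0 → ‖x‖⁻¹ • x ∈ normBase K := by
    intro x hxK hx
    have hxn : ‖x‖ ≠ 0 := norm_ne_zero_iff.mpr hx
    refine ⟨hKsmul _ (by positivity) _ hxK, ?_⟩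
    rw [norm_smul, norm_inv, norm_norm, inv_mul_cancel₀ hxn]
  -- -A is closed convex
  have hnAcl : IsClosed (-A) := hAcl.neg
  have hnAcv : Convex ℝ (-A) := hAcv.neg
  -- weak images
  have hA'cv : Convex ℝ (toWeakSpace ℝ E '' (-A)) :=
    hnAcv.linear_image (toWeakSpace ℝ E).toLinearMap
  have hS'cv : Convex ℝ (toWeakSpace ℝ E '' S) :=
    hScv.linear_image (toWeakSpace ℝ E).toLinearMap
  have hA'cl : IsClosed (toWeakSpace ℝ E '' (-A)) := by
    have := hnAcv.toWeakSpace_closure (𝕜 := ℝ)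
    rw [hnAcl.closure_eq] at this
    rw [this]
    exact isClosed_closure
  have hdisj : Disjoint (toWeakSpace ℝ E '' (-A)) (toWeakSpace ℝ E '' S) := by
    rw [Set.disjoint_left]
    rintro z ⟨x, hx, rfl⟩ ⟨y, hy, hxy⟩
    have hxyeq : y = x := (toWeakSpace ℝ E).injective hxy
    subst hxyeq
    have : -y ∈ A ∩ (-K) := ⟨by simpa using hx, by simpa using hSK hy⟩
    rw [hsep] at this
    have : y = 0 := by simpa [neg_eq_zero] using this
    exact h0 (this ▸ hy)
  obtain ⟨g, u, v, hgu, huv, hgv⟩ :=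
    geometric_hahn_banach_closed_compact hA'cv hA'cl hS'cv hcomp hdisj
  set f : E →L[ℝ] ℝ := g.comp (toWeakSpaceCLM ℝ E) with hf
  have hfS : ∀ s ∈ S, v < f s := fun s hs =>
    hgv _ (Set.mem_image_of_mem _ hs)
  have hu0 : 0 < u := by
    have h0A : (0 : E) ∈ -A := by simpa using hA.1
    have := hgu _ (Set.mem_image_of_mem _ h0A)
    simpa using this
  have hv0 : 0 < v := hu0.trans huv
  -- f nonneg on A
  have hfA : ∀ a ∈ A, 0 ≤ f a := by
    intro a ha
    by_contra hlt
    push_neg at hlt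
    set t : ℝ := u / (-(f a)) with ht
    have htpos : 0 < t := div_pos hu0 (by linarith)
    have hmem : t • (-a) ∈ -A := by
      simp only [Set.mem_neg, smul_neg, neg_neg]
      exact hA.2 t htpos.le a ha
    have := hgu _ (Set.mem_image_of_mem _ hmem)
    have heq : g (toWeakSpace ℝ E (t • (-a))) = t * (-(f a)) := by
      have : toWeakSpace ℝ E (t • (-a)) = t • (toWeakSpace ℝ E (-a)) := by
        simp
      rw [this, map_smul]
      simp [f, toWeakSpaceCLM_eq_toWeakSpace]
    rw [heq, ht, div_mul_cancel₀ _ (by linarith : -(f a) ≠ 0)] at this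
    exact lt_irrefl u this
  -- f strictly positive on K \ {0}
  have hfK : ∀ x ∈ K, x ≠ 0 → 0 < f x := by
    intro x hxK hx
    have hb := hBS (hnb x hxK hx)
    have h1 : v < f (‖x‖⁻¹ • x) := hfS _ hb
    have h2 : f (‖x‖⁻¹ • x) = ‖x‖⁻¹ * f x := by rw [map_smul]; rfl
    have hxn : 0 < ‖x‖ := norm_pos_iff.mpr hx
    nlinarith [inv_pos.mpr hxn]
  -- f ≠ 0
  obtain ⟨x0, hx0K, hx0⟩ : ∃ x ∈ K, x ≠ 0 := by
    by_contra h
    push_neg at h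
    exact hKne (Set.eq_singleton_iff_unique_mem.mpr ⟨hK0, fun y hy => by
      by_contra hne; exact hne (h y hy)⟩)
  refine ⟨f, ?_, hfA, ?_⟩
  · intro hf0
    have := hfK x0 hx0K hx0
    rw [hf0] at this
    simp at this
  · intro k hk hkne
    have h1 : -k ∈ K := by simpa using hk
    have h2 : (-k : E) ≠ 0 := by simpa using hkne
    have := hfK _ h1 h2
    rw [map_neg] at this
    linarith
end

section
/- Let E be a real normed space and K ⊆ E a nontrivial cone with norm-base B_K such that the weak closure cl_w B_K is weakly compact. If x* ∈ K^{w#}, then the number c := sInf {x*(x) | x ∈ cl_w B_K} is strictly positive and the pair (x*, c) belongs to the augmented dual cone K^{a+}. -/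
open Set

variable {E : Type*} [NormedAddCommGroup E] [NormedSpace ℝ E]

theorem stmt5 (K : Set E) (hK : IsNontrivialCone K)
    (hcomp : WeaklyCompact (wClosure (normBase K)))
    (f : E →L[ℝ] ℝ) (hf : f ∈ wSharpCone K) :
    0 < sInf ((fun x => f x) '' wClosure (normBase K)) ∧
    (f, sInf ((fun x => f x) '' wClosure (normBase K))) ∈ augDualCone K := by
  -- weak continuity of f
  have hfc : Continuous fun x : WeakSpace ℝ E => f x :=
    WeakBilin.eval_continuous ((topDualPairing ℝ E).flip) f
  -- normBase K is nonempty
  obtain ⟨⟨h0K, hcone⟩, hne, -⟩ := hK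
  obtain ⟨z, hzK, hz0⟩ : ∃ z ∈ K, z ≠ 0 := by
    by_contra h
    push_neg at h
    exact hne (Set.eq_singleton_iff_unique_mem.2 ⟨h0K, fun x hx => by
      by_contra hx0; exact hx0 (h x hx ▸ rfl) ⟩)
  have hmem : ∀ y ∈ K, y ≠ 0 → (‖y‖⁻¹ • y) ∈ normBase K := by
    intro y hy hy0
    refine ⟨hcone _ (by positivity) y hy, ?_⟩
    rw [norm_smul, norm_inv, norm_norm, inv_mul_cancel₀ (norm_ne_zero_iff.2 hy0)]
  have hsub : normBase K ⊆ wClosure (normBase K) := by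
    intro x hx
    exact ⟨toWeakSpace ℝ E x, subset_closure ⟨x, hx, rfl⟩, by simp⟩
  have hSne : (wClosure (normBase K)).Nonempty :=
    ⟨_, hsub (hmem z hzK hz0)⟩
  -- the image is compact
  have himgeq : (fun x => f x) '' wClosure (normBase K)
      = (fun x : WeakSpace ℝ E => f x) '' ((toWeakSpace ℝ E) '' wClosure (normBase K)) := by
    rw [Set.image_image]; rfl
  have hcompimg : IsCompact ((fun x => f x) '' wClosure (normBase K)) := by
    rw [himgeq]; exact hcomp.image hfc
  have hneimg : ((fun x => f x) '' wClosure (normBase K)).Nonempty := hSne.image _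
  have hbdd : BddBelow ((fun x => f x) '' wClosure (normBase K)) := hcompimg.bddBelow
  have hle : ∀ x ∈ wClosure (normBase K), sInf ((fun x => f x) '' wClosure (normBase K)) ≤ f x :=
    fun x hx => csInf_le hbdd ⟨x, hx, rfl⟩
  have hpos : 0 < sInf ((fun x => f x) '' wClosure (normBase K)) := by
    obtain ⟨a, ha, haeq⟩ := hcompimg.sInf_mem hneimg
    rw [← haeq]
    exact hf a ha
  refine ⟨hpos, hpos.le, ?_⟩
  intro y hy
  rcases eq_or_ne y 0 with rfl | hy0
  · simp
  · have h1 := hle _ (hsub (hmem y hy hy0))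
    have hny : (0:ℝ) < ‖y‖ := norm_pos_iff.2 hy0
    rw [map_smul, smul_eq_mul] at h1
    have h2 := mul_le_mul_of_nonneg_right h1 hny.le
    rw [mul_comm (‖y‖⁻¹) (f y), mul_assoc, inv_mul_cancel₀ hny.ne', mul_one] at h2
    simpa using sub_nonneg.2 h2
end

section
/- Let E be a real normed space and K ⊆ E a nontrivial cone with norm-base B_K. Assume K is weakly closed, the weak closure cl_w B_K is weakly compact, and 0 ∉ cl_w B_K. If x* ∈ K^#, then the number c := sInf {x*(x) | x ∈ cl_w B_K} is strictly positive and the pair (x*, c) belongs to the augmented dual cone K^{a+}. -/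
open Set

variable {E : Type*} [NormedAddCommGroup E] [NormedSpace ℝ E]

theorem stmt6 (K : Set E) (hK : IsNontrivialCone K)
    (hwcl : WeaklyClosed K)
    (hcomp : WeaklyCompact (wClosure (normBase K)))
    (h0 : (0 : E) ∉ wClosure (normBase K))
    (f : E →L[ℝ] ℝ) (hf : f ∈ sharpCone K) :
    0 < sInf ((fun x => f x) '' wClosure (normBase K)) ∧
    (f, sInf ((fun x => f x) '' wClosure (normBase K))) ∈ augDualCone K := by
  set S : Set E := wClosure (normBase K) with hS
  -- basic facts
  have hsub : normBase K ⊆ S := fun x hx =>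
    ⟨toWeakSpace ℝ E x, subset_closure (mem_image_of_mem _ hx),
      (toWeakSpace ℝ E).symm_apply_apply x⟩
  have hSK : S ⊆ K := by
    have hmono : S ⊆ wClosure K := by
      intro x hx
      obtain ⟨y, hy, rfl⟩ := hx
      exact ⟨y, closure_mono (image_mono (fun z hz => hz.1)) hy, rfl⟩
    rwa [hwcl] at hmono
  obtain ⟨⟨h0K, hcone⟩, hKne, -⟩ := hK
  have hne : S.Nonempty := by
    obtain ⟨x, hxK, hx0⟩ : ∃ x ∈ K, x ≠ 0 := by
      by_contra h
      push_neg at h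
      exact hKne (Subset.antisymm (fun z hz => h z hz) (fun z hz => hz ▸ h0K))
    have hxn : ‖x‖ ≠ 0 := norm_ne_zero_iff.mpr hx0
    refine ⟨‖x‖⁻¹ • x, hsub ⟨hcone _ (inv_nonneg.mpr (norm_nonneg x)) x hxK, ?_⟩⟩
    rw [norm_smul, norm_inv, norm_norm, inv_mul_cancel₀ hxn]
  have hpos : ∀ x ∈ S, 0 < f x := fun x hx =>
    hf x (hSK hx) (fun h => h0 (h ▸ hx))
  -- compactness of the image
  have hcpt : IsCompact ((fun x => f x) '' S) := by
    have : (fun x => f x) '' S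
        = (fun y : WeakSpace ℝ E => f ((toWeakSpace ℝ E).symm y)) '' (toWeakSpace ℝ E '' S) := by
      rw [image_image]
      simp [LinearEquiv.symm_apply_apply]
    rw [this]
    exact hcomp.image (WeakBilin.eval_continuous _ f)
  have hne' : ((fun x => f x) '' S).Nonempty := hne.image _
  have hmem : sInf ((fun x => f x) '' S) ∈ (fun x => f x) '' S := hcpt.sInf_mem hne'
  have hbdd : BddBelow ((fun x => f x) '' S) := hcpt.bddBelow
  obtain ⟨x₀, hx₀S, hx₀⟩ := hmem
  have hc : 0 < sInf ((fun x => f x) '' S) := hx₀ ▸ hpos x₀ hx₀S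
  refine ⟨hc, hc.le, fun y hy => ?_⟩
  rcases eq_or_ne y 0 with rfl | hy0
  · simp
  · have hyn : (0:ℝ) < ‖y‖ := norm_pos_iff.mpr hy0
    have hu : ‖y‖⁻¹ • y ∈ S := by
      refine hsub ⟨hcone _ (inv_nonneg.mpr hyn.le) y hy, ?_⟩
      rw [norm_smul, norm_inv, norm_norm, inv_mul_cancel₀ hyn.ne']
    have hle : sInf ((fun x => f x) '' S) ≤ f (‖y‖⁻¹ • y) :=
      csInf_le hbdd (mem_image_of_mem _ hu)
    rw [map_smul, smul_eq_mul] at hle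
    have := (mul_le_mul_iff_of_pos_right hyn).mpr hle
    rw [inv_mul_eq_div, div_mul_cancel₀ _ hyn.ne'] at this
    linarith
end

section
/- Let E be a real normed space and K ⊆ E a nontrivial cone with norm-base B_K. If (x*, α) ∈ K^{a+} with α > 0, then for every ε with 0 < ε ≤ α the pair (x*, α − ε) belongs to K^{aw#}. -/
open Set

variable {E : Type*} [NormedAddCommGroup E] [NormedSpace ℝ E]

theorem stmt7 (K : Set E) (hK : IsNontrivialCone K) (f : E →L[ℝ] ℝ) (α ε : ℝ)
    (hmem : (f, α) ∈ augDualCone K) (hα : 0 < α) (hε : 0 < ε) (hεα : ε ≤ α) :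
    (f, α - ε) ∈ augWSharpCone K := by
  obtain ⟨hα0, hf⟩ := hmem
  refine ⟨show (0:ℝ) ≤ α - ε by linarith, ?_, ?_⟩
  · intro k hk hk0
    have h1 := hf k hk
    have h2 : (0:ℝ) < α * ‖k‖ := mul_pos hα (norm_pos_iff.mpr hk0)
    simp only at h1
    linarith
  · rintro y ⟨z, hz, rfl⟩
    have hcont : Continuous fun z : WeakSpace ℝ E => f ((toWeakSpace ℝ E).symm z) :=
      WeakBilin.eval_continuous _ f
    have hclosed : IsClosed {z : WeakSpace ℝ E | α ≤ f ((toWeakSpace ℝ E).symm z)} :=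
      isClosed_le continuous_const hcont
    have hsub : closure ((toWeakSpace ℝ E) '' normBase K) ⊆
        {z : WeakSpace ℝ E | α ≤ f ((toWeakSpace ℝ E).symm z)} := by
      apply closure_minimal _ hclosed
      rintro _ ⟨x, hx, rfl⟩
      simp only [Set.mem_setOf_eq, LinearEquiv.symm_apply_apply]
      have h1 := hf x hx.1
      rw [hx.2] at h1
      simp only at h1
      linarith
    have h3 := hsub hz
    simp only [Set.mem_setOf_eq] at h3
    simp only
    linarith
end

section
/- Let E be a real normed space and K ⊆ E a nontrivial cone with norm-base B_K. If the weak closure cl_w B_K is weakly compact, then the following three conditions are pairwise equivalent: (1) K^{w#} ≠ ∅; (2) K^{aw#} ≠ ∅; (3) 0 ∉ cl S_K, where S_K = conv(B_K) and cl denotes norm closure. -/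
open Set

variable {E : Type*} [NormedAddCommGroup E] [NormedSpace ℝ E]

theorem stmt9 (K : Set E) (hK : IsNontrivialCone K)
    (hcomp : WeaklyCompact (wClosure (normBase K))) :
    List.TFAE [
      (wSharpCone K).Nonempty,
      (augWSharpCone K).Nonempty,
      (0 : E) ∉ closure (convBase K)] := by
  classical
  obtain ⟨⟨h0K, hcone⟩, hKne, -⟩ := hK
  set B := normBase K with hBdef
  -- B nonempty
  have hBne : B.Nonempty := by
    obtain ⟨x, hxK, hx0⟩ : ∃ x ∈ K, x ≠ 0 := by
      by_contra h
      push_neg at h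
      apply hKne
      ext y
      simp only [Set.mem_singleton_iff]
      exact ⟨fun hy => by by_contra h'; exact h' (h y hy), fun hy => hy ▸ h0K⟩
    refine ⟨‖x‖⁻¹ • x, hcone _ (by positivity) x hxK, ?_⟩
    rw [norm_smul, norm_inv, norm_norm, inv_mul_cancel₀ (norm_ne_zero_iff.2 hx0)]
  have hBW : B ⊆ wClosure B := fun x hx =>
    ⟨toWeakSpace ℝ E x, subset_closure ⟨x, hx, rfl⟩, (toWeakSpace ℝ E).symm_apply_apply x⟩
  -- weak continuity helper
  have hcont : ∀ f : E →L[ℝ] ℝ,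
      Continuous fun z : WeakSpace ℝ E => f ((toWeakSpace ℝ E).symm z) :=
    fun f => WeakBilin.eval_continuous (topDualPairing ℝ E).flip f
  have key : ∀ (f : E →L[ℝ] ℝ) (u : ℝ), (∀ x ∈ B, u ≤ f x) → ∀ x ∈ wClosure B, u ≤ f x := by
    intro f u hf x hx
    obtain ⟨y, hy, rfl⟩ := hx
    have hclosed : IsClosed {z : WeakSpace ℝ E | u ≤ f ((toWeakSpace ℝ E).symm z)} :=
      isClosed_le continuous_const (hcont f)
    have hsub : closure ((toWeakSpace ℝ E) '' B) ⊆
        {z : WeakSpace ℝ E | u ≤ f ((toWeakSpace ℝ E).symm z)} := by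
      refine closure_minimal ?_ hclosed
      rintro z ⟨w, hw, rfl⟩
      simpa using hf w hw
    exact hsub hy
  -- compactness of closure (e '' B)
  have himg : (toWeakSpace ℝ E) '' (wClosure B) = closure ((toWeakSpace ℝ E) '' B) := by
    unfold wClosure
    rw [Set.image_image]
    simp
  have hWc : IsCompact (closure ((toWeakSpace ℝ E) '' B)) := by
    rw [← himg]; exact hcomp
  have hWne : (closure ((toWeakSpace ℝ E) '' B)).Nonempty := by
    obtain ⟨x, hx⟩ := hBne
    exact ⟨toWeakSpace ℝ E x, subset_closure ⟨x, hx, rfl⟩⟩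
  -- positive minimum for wSharp functionals
  have hmin : ∀ f ∈ wSharpCone K, ∃ m > 0, ∀ x ∈ wClosure B, m ≤ f x := by
    intro f hf
    obtain ⟨z, hz, hzmin⟩ := hWc.exists_isMinOn hWne (hcont f).continuousOn
    refine ⟨f ((toWeakSpace ℝ E).symm z), hf _ ⟨z, hz, rfl⟩, ?_⟩
    rintro x ⟨y, hy, rfl⟩
    exact hzmin hy
  -- sharpness from positivity on B
  have hsharp : ∀ f : E →L[ℝ] ℝ, (∀ x ∈ B, 0 < f x) → f ∈ sharpCone K := by
    intro f hf k hk hk0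
    have hb : (‖k‖⁻¹ • k) ∈ B := by
      refine ⟨hcone _ (by positivity) k hk, ?_⟩
      rw [norm_smul, norm_inv, norm_norm, inv_mul_cancel₀ (norm_ne_zero_iff.2 hk0)]
    have := hf _ hb
    rw [map_smul, smul_eq_mul] at this
    have hk' : (0 : ℝ) < ‖k‖ := norm_pos_iff.2 hk0
    have h2 : 0 < ‖k‖ * (‖k‖⁻¹ * f k) := mul_pos hk' this
    rwa [← mul_assoc, mul_inv_cancel₀ hk'.ne', one_mul] at h2
  tfae_have 1 → 2 := by
    rintro ⟨f, hf⟩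
    obtain ⟨m, hm, hmle⟩ := hmin f hf
    refine ⟨(f, m / 2), by positivity, hsharp f fun x hx => hf x (hBW hx), ?_⟩
    intro y hy
    have := hmle y hy
    simpa using lt_of_lt_of_le (by linarith) this
  tfae_have 2 → 1 := by
    rintro ⟨⟨f, a⟩, ha, -, hfa⟩
    exact ⟨f, fun x hx => lt_of_le_of_lt ha (hfa x hx)⟩
  tfae_have 1 → 3 := by
    rintro ⟨f, hf⟩ h0
    obtain ⟨m, hm, hmle⟩ := hmin f hf
    have hB' : ∀ x ∈ B, m ≤ f x := fun x hx => hmle x (hBW hx)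
    have hconv : ∀ x ∈ convBase K, m ≤ f x := by
      intro x hx
      exact convexHull_min hB' (convex_halfSpace_ge (f : E →ₗ[ℝ] ℝ).isLinear m) hx
    have hclos : ∀ x ∈ closure (convBase K), m ≤ f x := fun x hx =>
      closure_minimal hconv (isClosed_le continuous_const f.continuous) hx
    have := hclos 0 h0
    simp at this
    linarith
  tfae_have 3 → 1 := by
    intro h0
    obtain ⟨f, u, hfu, hless⟩ :=
      geometric_hahn_banach_point_closed ((convex_convexHull ℝ B).closure) isClosed_closure h0
    have hu : 0 < u := by simpa using hfu
    refine ⟨f, fun x hx => lt_of_lt_of_le hu ?_⟩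
    exact key f u (fun b hb =>
      (hless b (subset_closure (subset_convexHull ℝ _ hb))).le) x hx
  tfae_finish
end

section
/- Let E be a real normed space and K ⊆ E a nontrivial cone with norm-base B_K. Then the algebraic interior of the augmented dual cone satisfies cor K^{a+} = {(x*, α) ∈ E* × ℝ | x* ∈ K⁺, α > 0, and sInf {x*(x) | x ∈ B_K} > α}, and this set is contained in {(x*, α) ∈ K^{a#} | α > 0}. -/
open Set

variable {E : Type*} [NormedAddCommGroup E] [NormedSpace ℝ E]

theorem stmt10 (K : Set E) (hK : IsNontrivialCone K) :
    core (augDualCone K) =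
      {p : (E →L[ℝ] ℝ) × ℝ | p.1 ∈ dualCone K ∧ 0 < p.2 ∧
        p.2 < sInf ((fun x => p.1 x) '' normBase K)} ∧
    core (augDualCone K) ⊆ {p ∈ augSharpCone K | 0 < p.2} := by
  obtain ⟨⟨h0K, hcone⟩, hne0, -⟩ := hK
  obtain ⟨z, hzK, hz0⟩ : ∃ z ∈ K, z ≠ 0 := by
    by_contra h
    push_neg at h
    exact hne0 (Set.eq_singleton_iff_unique_mem.mpr ⟨h0K, h⟩)
  have hBmem : ∀ y ∈ K, y ≠ 0 → (‖y‖⁻¹ • y) ∈ normBase K := by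
    intro y hy hy0
    refine ⟨hcone _ (by positivity) y hy, ?_⟩
    rw [norm_smul, norm_inv, norm_norm, inv_mul_cancel₀ (norm_ne_zero_iff.mpr hy0)]
  have hval : ∀ (f : E →L[ℝ] ℝ) (y : E), y ≠ 0 → f y = ‖y‖ * f (‖y‖⁻¹ • y) := by
    intro f y hy0
    rw [map_smul, smul_eq_mul, ← mul_assoc, mul_inv_cancel₀ (norm_ne_zero_iff.mpr hy0), one_mul]
  have hBne : (normBase K).Nonempty := ⟨_, hBmem z hzK hz0⟩
  have heq : core (augDualCone K) = {p : (E →L[ℝ] ℝ) × ℝ | p.1 ∈ dualCone K ∧ 0 < p.2 ∧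
      p.2 < sInf ((fun x => p.1 x) '' normBase K)} := by
    ext ⟨f, α⟩
    simp only [core, augDualCone, dualCone, mem_setOf_eq]
    constructor
    · rintro ⟨⟨hα, hfα⟩, hcore⟩
      obtain ⟨ε1, hε1, h1⟩ := hcore (0, -1)
      have hαpos : 0 < α := by
        have h := (h1 ε1 ⟨le_of_lt hε1, le_refl _⟩).1
        simp only [Prod.snd_add, Prod.smul_snd, smul_eq_mul] at h
        linarith
      obtain ⟨ε2, hε2, h2⟩ := hcore (0, 1)
      have hlb : ∀ x ∈ normBase K, α + ε2 ≤ f x := by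
        rintro x ⟨hxK, hx1⟩
        have h := (h2 ε2 ⟨le_of_lt hε2, le_refl _⟩).2 x hxK
        simp only [Prod.fst_add, Prod.snd_add, Prod.smul_fst, Prod.smul_snd, smul_eq_mul,
          ContinuousLinearMap.add_apply, ContinuousLinearMap.coe_smul', Pi.smul_apply,
          ContinuousLinearMap.zero_apply, smul_zero, add_zero, hx1, mul_one] at h
        linarith
      refine ⟨fun k hk => ?_, hαpos, ?_⟩
      · have h := hfα k hk
        nlinarith [norm_nonneg k]
      · refine lt_of_lt_of_le (by linarith : α < α + ε2) (le_csInf (hBne.image _) ?_)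
        rintro b ⟨x, hx, rfl⟩
        exact hlb x hx
    · rintro ⟨hfdual, hαpos, hsinf⟩
      have hkey : ∀ x ∈ normBase K, α < f x := by
        intro x hx
        refine lt_of_lt_of_le hsinf (csInf_le ⟨0, ?_⟩ ⟨x, hx, rfl⟩)
        rintro b ⟨u, hu, rfl⟩
        exact hfdual u hu.1
      have hmemb : (0 : ℝ) ≤ α ∧ ∀ y ∈ K, 0 ≤ f y - α * ‖y‖ := by
        refine ⟨le_of_lt hαpos, fun y hy => ?_⟩
        rcases eq_or_ne y 0 with rfl | hy0
        · simp
        · have hx := hkey _ (hBmem y hy hy0)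
          rw [hval f y hy0]
          have : (0:ℝ) < ‖y‖ := norm_pos_iff.mpr hy0
          nlinarith
      refine ⟨hmemb, ?_⟩
      rintro ⟨g, β⟩
      set m := sInf ((fun x => f x) '' normBase K) with hm
      refine ⟨min ((m - α)/(‖g‖ + |β| + 1)) (α/(|β| + 1)), ?_, ?_⟩
      · apply lt_min
        · apply div_pos (by linarith) (by positivity)
        · apply div_pos hαpos (by positivity)
      · rintro t ⟨ht0, htε⟩
        have htg : t * (‖g‖ + |β| + 1) ≤ m - α := by
          have h := le_trans htε (min_le_left _ _)
          rw [le_div_iff₀ (by positivity)] at h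
          linarith
        have htβ : t * (|β| + 1) ≤ α := by
          have h := le_trans htε (min_le_right _ _)
          rw [le_div_iff₀ (by positivity)] at h
          linarith
        constructor
        · simp only [Prod.snd_add, Prod.smul_snd, smul_eq_mul]
          nlinarith [le_abs_self β, neg_abs_le β, abs_nonneg β]
        · intro y hy
          simp only [Prod.fst_add, Prod.snd_add, Prod.smul_fst, Prod.smul_snd, smul_eq_mul,
            ContinuousLinearMap.add_apply, ContinuousLinearMap.coe_smul', Pi.smul_apply]
          rcases eq_or_ne y 0 with rfl | hy0
          · simp
          · set x := ‖y‖⁻¹ • y with hxdef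
            have hxB := hBmem y hy hy0
            have hmx : m ≤ f x := csInf_le ⟨0, by rintro b ⟨u, hu, rfl⟩; exact hfdual u hu.1⟩ ⟨x, hxB, rfl⟩
            have hgx : |g x| ≤ ‖g‖ := by
              have h := g.le_opNorm x
              rw [hxB.2, mul_one] at h
              exact h
            have hyn : (0:ℝ) < ‖y‖ := norm_pos_iff.mpr hy0
            have key : 0 ≤ f x + t * g x - (α + t * β) := by
              nlinarith [neg_abs_le (g x), le_abs_self β, neg_abs_le β, abs_nonneg β, norm_nonneg g, abs_nonneg (g x)]
            rw [hval f y hy0, hval g y hy0]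
            nlinarith
  refine ⟨heq, ?_⟩
  intro p hp
  rw [heq] at hp
  obtain ⟨hfdual, hαpos, hsinf⟩ := hp
  have hkey : ∀ x ∈ normBase K, p.2 < p.1 x := by
    intro x hx
    refine lt_of_lt_of_le hsinf (csInf_le ⟨0, ?_⟩ ⟨x, hx, rfl⟩)
    rintro b ⟨u, hu, rfl⟩
    exact hfdual u hu.1
  have hstrict : ∀ y ∈ K, y ≠ 0 → 0 < p.1 y - p.2 * ‖y‖ := by
    intro y hy hy0
    have hx := hkey _ (hBmem y hy hy0)
    rw [hval p.1 y hy0]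
    have hyn : (0:ℝ) < ‖y‖ := norm_pos_iff.mpr hy0
    nlinarith
  refine ⟨⟨le_of_lt hαpos, fun k hk hk0 => ?_, hstrict⟩, hαpos⟩
  have h := hstrict k hk hk0
  have hyn : (0:ℝ) < ‖k‖ := norm_pos_iff.mpr hk0
  nlinarith
end

section
/- Let E be a real normed space and K ⊆ E a nontrivial cone with norm-base B_K. If B_K is weakly compact, then cor K^{a+} = {(x*, α) ∈ K^{a#} | α > 0}. -/
open Set

variable {E : Type*} [NormedAddCommGroup E] [NormedSpace ℝ E]

lemma mem_normBase_scale {K : Set E} (hK : IsCone K) {y : E} (hy : y ∈ K) (hy0 : y ≠ 0) :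
    ‖y‖⁻¹ • y ∈ normBase K := by
  refine ⟨hK.2 _ (by positivity) y hy, ?_⟩
  rw [norm_smul, norm_inv, norm_norm, inv_mul_cancel₀ (norm_ne_zero_iff.2 hy0)]

lemma normBase_nonempty {K : Set E} (hK : IsNontrivialCone K) : (normBase K).Nonempty := by
  obtain ⟨hc, hne, -⟩ := hK
  have : ∃ y ∈ K, y ≠ 0 := by
    by_contra h
    push_neg at h
    exact hne (Set.eq_singleton_iff_unique_mem.2 ⟨hc.1, fun y hy => h y hy⟩)
  obtain ⟨y, hy, hy0⟩ := this
  exact ⟨_, mem_normBase_scale hc hy hy0⟩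

lemma exists_min_on_base {K : Set E} (hK : IsNontrivialCone K)
    (hcomp : WeaklyCompact (normBase K)) (f : E →L[ℝ] ℝ) :
    ∃ x₀ ∈ normBase K, ∀ x ∈ normBase K, f x₀ ≤ f x := by
  have hcont : Continuous fun z : WeakSpace ℝ E => f ((toWeakSpace ℝ E).symm z) :=
    WeakBilin.eval_continuous _ f
  have hne : ((toWeakSpace ℝ E) '' normBase K).Nonempty :=
    (normBase_nonempty hK).image _
  obtain ⟨z₀, hz₀, hmin⟩ := hcomp.exists_isMinOn hne hcont.continuousOn
  obtain ⟨x₀, hx₀, rfl⟩ := hz₀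
  refine ⟨x₀, hx₀, fun x hx => ?_⟩
  have := hmin (Set.mem_image_of_mem _ hx)
  simpa using this

theorem stmt12 (K : Set E) (hK : IsNontrivialCone K)
    (hcomp : WeaklyCompact (normBase K)) :
    core (augDualCone K) = {p ∈ augSharpCone K | 0 < p.2} := by
  have hcone := hK.1
  ext ⟨f, α⟩
  constructor
  · rintro ⟨⟨hα, hd⟩, hcore⟩
    -- α > 0
    obtain ⟨ε, hε, hεmem⟩ := hcore ((0 : E →L[ℝ] ℝ), (-1 : ℝ))
    have hα' : (0:ℝ) < α := by
      have := (hεmem ε ⟨le_of_lt hε, le_refl ε⟩).1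
      simp only [Prod.snd_add, Prod.smul_snd, smul_eq_mul] at this
      nlinarith
    -- strict inequality
    have hstrict : ∀ y ∈ K, y ≠ 0 → 0 < f y - α * ‖y‖ := by
      intro y hy hy0
      obtain ⟨g, -, hg2⟩ := exists_dual_vector ℝ y (norm_ne_zero_iff.2 hy0)
      obtain ⟨ε, hε, hεmem⟩ := hcore (-g, 0)
      have := (hεmem ε ⟨le_of_lt hε, le_refl ε⟩).2 y hy
      simp only [Prod.fst_add, Prod.smul_fst, Prod.snd_add, Prod.smul_snd, smul_eq_mul,
        ContinuousLinearMap.add_apply, ContinuousLinearMap.coe_smul', Pi.smul_apply,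
        ContinuousLinearMap.neg_apply, smul_eq_mul, mul_zero, add_zero] at this
      have hgy : g y = ‖y‖ := by simpa using hg2
      have hny : (0:ℝ) < ‖y‖ := norm_pos_iff.2 hy0
      nlinarith
    refine ⟨⟨hα, fun k hk hk0 => ?_, hstrict⟩, hα'⟩
    have := hstrict k hk hk0
    nlinarith [norm_pos_iff.2 hk0, this]
  · rintro ⟨⟨hα, hf, hstrict⟩, hαpos⟩
    have hbase : ∀ x ∈ normBase K, α < f x := by
      rintro x ⟨hx, hx1⟩
      have := hstrict x hx (by intro h; rw [h] at hx1; simp at hx1)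
      rw [hx1] at this; linarith
    refine ⟨⟨hα, fun y hy => ?_⟩, ?_⟩
    · rcases eq_or_ne y 0 with rfl | hy0
      · simp
      · have hx := mem_normBase_scale hcone hy hy0
        have h1 := (hbase _ hx).le
        have hny : (0:ℝ) < ‖y‖ := norm_pos_iff.2 hy0
        have h2 : f (‖y‖⁻¹ • y) = ‖y‖⁻¹ * f y := by simp
        rw [h2] at h1
        rw [sub_nonneg]
        calc α * ‖y‖ ≤ (‖y‖⁻¹ * f y) * ‖y‖ := by nlinarith
          _ = f y := by field_simp
    · rintro ⟨g, β⟩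
      obtain ⟨x₀, hx₀, hmin⟩ := exists_min_on_base hK hcomp f
      obtain ⟨x₁, hx₁, hmin'⟩ := exists_min_on_base hK hcomp g
      set m : ℝ := f x₀ - α with hm
      have hmpos : 0 < m := sub_pos.2 (hbase _ hx₀)
      set c : ℝ := β - g x₁ with hc
      set ε : ℝ := min (m / max c 1) (α / max |β| 1) with hε
      have hεpos : 0 < ε := lt_min (by positivity) (by positivity)
      refine ⟨ε, hεpos, fun t ⟨ht0, htε⟩ => ?_⟩
      have hsnd : 0 ≤ α + t * β := by
        have h1 : t * |β| ≤ ε * |β| := by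
          apply mul_le_mul_of_nonneg_right htε (abs_nonneg β)
        have h2 : ε * |β| ≤ α := by
          have hεle : ε ≤ α / max |β| 1 := min_le_right _ _
          have hb1 : |β| ≤ max |β| 1 := le_max_left _ _
          have hM : (0:ℝ) < max |β| 1 := lt_of_lt_of_le one_pos (le_max_right _ _)
          calc ε * |β| ≤ (α / max |β| 1) * |β| :=
                mul_le_mul_of_nonneg_right hεle (abs_nonneg β)
            _ ≤ (α / max |β| 1) * max |β| 1 := by
                apply mul_le_mul_of_nonneg_left hb1 (by positivity)
            _ = α := by field_simp
        nlinarith [neg_abs_le β, abs_nonneg β]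
      refine ⟨by simpa [Prod.snd_add, Prod.smul_snd, smul_eq_mul] using hsnd, fun y hy => ?_⟩
      rcases eq_or_ne y 0 with rfl | hy0
      · simp
      · have hx := mem_normBase_scale hcone hy hy0
        set x : E := ‖y‖⁻¹ • y with hxdef
        have hny : (0:ℝ) < ‖y‖ := norm_pos_iff.2 hy0
        -- key pointwise inequality on the base
        have hkey : t * (β - g x) ≤ f x - α := by
          have hfx : m ≤ f x - α := by
            have := hmin x hx
            simp only [hm]; linarith
          rcases le_or_gt (β - g x) 0 with hneg | hpos
          · nlinarith
          · have hgc : β - g x ≤ c := by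
              have := hmin' x hx
              simp only [hc]; linarith
            have hεle : ε ≤ m / max c 1 := min_le_left _ _
            have hM : (0:ℝ) < max c 1 := lt_of_lt_of_le one_pos (le_max_right _ _)
            have hcM : c ≤ max c 1 := le_max_left _ _
            have h3 : t * (β - g x) ≤ (m / max c 1) * c := by
              calc t * (β - g x) ≤ t * c := by nlinarith
                _ ≤ (m / max c 1) * c := by
                    apply mul_le_mul_of_nonneg_right (le_trans htε hεle) (le_trans hpos.le hgc)
            have h4 : (m / max c 1) * c ≤ m := by
              rw [div_mul_eq_mul_div, div_le_iff₀ hM]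
              nlinarith
            linarith
        -- scale back
        have hfy : f y = ‖y‖ * f x := by
          simp only [hxdef, map_smul, smul_eq_mul]; field_simp
        have hgy : g y = ‖y‖ * g x := by
          simp only [hxdef, map_smul, smul_eq_mul]; field_simp
        have hxn : ‖x‖ = 1 := hx.2
        have : 0 ≤ (f y + t * g y) - (α + t * β) * ‖y‖ := by
          rw [hfy, hgy]
          have : 0 ≤ f x + t * g x - (α + t * β) := by linarith [hkey]
          nlinarith
        simpa [Prod.fst_add, Prod.smul_fst, Prod.snd_add, Prod.smul_snd, smul_eq_mul,
          ContinuousLinearMap.add_apply, ContinuousLinearMap.coe_smul', Pi.smul_apply] using this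
end

section
/- Let E be a real normed space, K ⊆ E a nontrivial cone with norm-base B_K, and A ⊆ E a nontrivial cone with norm-base B_A. For (x*, α) ∈ E* × ℝ with α ≥ 0, the following are equivalent: (1) (x*, α) ∈ K^{aw#} and x*(a) + α‖a‖ > 0 for all a ∈ A \ {0} and x*(k) + α‖k‖ < 0 for all k ∈ (−K) \ {0}; (2) x*(a) > −α for all a ∈ B_A and −α > x*(k) for all k ∈ −cl_w B_K (the negation of the weak closure of B_K). -/
open Set

variable {E : Type*} [NormedAddCommGroup E] [NormedSpace ℝ E]

theorem stmt13 (K A : Set E) (hK : IsNontrivialCone K) (hA : IsNontrivialCone A)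
    (f : E →L[ℝ] ℝ) (α : ℝ) (hα : 0 ≤ α) :
    ((f, α) ∈ augWSharpCone K ∧
      (∀ a ∈ A, a ≠ 0 → 0 < f a + α * ‖a‖) ∧
      (∀ k ∈ (-K : Set E), k ≠ 0 → f k + α * ‖k‖ < 0)) ↔
    ((∀ a ∈ normBase A, -α < f a) ∧
      (∀ k ∈ -(wClosure (normBase K)), f k < -α)) := by
  have hsub : normBase K ⊆ wClosure (normBase K) := by
    intro x hx
    exact ⟨toWeakSpace ℝ E x, subset_closure ⟨x, hx, rfl⟩, (toWeakSpace ℝ E).symm_apply_apply x⟩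
  constructor
  · rintro ⟨⟨-, -, hw⟩, hAa, hKk⟩
    constructor
    · intro a ha
      have := hAa a ha.1 (by rintro rfl; simpa using ha.2)
      rw [ha.2, mul_one] at this; linarith
    · intro k hk
      have h : -k ∈ wClosure (normBase K) := by simpa using hk
      have := hw _ h
      simp only [map_neg] at this ⊢; linarith
  · rintro ⟨h1, h2⟩
    have hw : ∀ y ∈ wClosure (normBase K), α < f y := by
      intro y hy
      have := h2 (-y) (by simpa using hy)
      simp only [map_neg] at this; linarith
    have hsharp : f ∈ sharpCone K := by
      intro k hk hk0
      have hn : (0:ℝ) < ‖k‖ := norm_pos_iff.mpr hk0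
      have hb : (‖k‖⁻¹ • k) ∈ normBase K := by
        refine ⟨hK.1.2 _ (by positivity) k hk, ?_⟩
        rw [norm_smul, norm_inv, norm_norm, inv_mul_cancel₀ hn.ne']
      have := hw _ (hsub hb)
      rw [map_smul, smul_eq_mul, inv_mul_eq_div, lt_div_iff₀ hn] at this
      nlinarith [mul_nonneg hα hn.le]
    refine ⟨⟨hα, hsharp, hw⟩, ?_, ?_⟩
    · intro a ha ha0
      have hn : (0:ℝ) < ‖a‖ := norm_pos_iff.mpr ha0
      have hb : (‖a‖⁻¹ • a) ∈ normBase A := by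
        refine ⟨hA.1.2 _ (by positivity) a ha, ?_⟩
        rw [norm_smul, norm_inv, norm_norm, inv_mul_cancel₀ hn.ne']
      have := h1 _ hb
      rw [map_smul, smul_eq_mul, inv_mul_eq_div, lt_div_iff₀ hn] at this
      linarith
    · intro k hk hk0
      have hk' : -k ∈ K := hk
      have hn : (0:ℝ) < ‖k‖ := norm_pos_iff.mpr hk0
      have hb : (‖k‖⁻¹ • (-k)) ∈ normBase K := by
        refine ⟨hK.1.2 _ (by positivity) _ hk', ?_⟩
        rw [norm_smul, norm_inv, norm_norm, norm_neg, inv_mul_cancel₀ hn.ne']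
      have := hw _ (hsub hb)
      rw [map_smul, map_neg, smul_eq_mul, inv_mul_eq_div, lt_div_iff₀ hn] at this
      linarith
end

section
/- Let E be a real normed space, K ⊆ E a nontrivial cone with norm-base B_K, and A ⊆ E a nontrivial cone with norm-base B_A. Assume that at least one of the sets cl S_{−K} and cl S_A^0 is weakly compact. If cl S_A^0 ∩ cl S_{−K} = ∅, then there exists (x*, α) ∈ K^{aw#} with α > 0 such that x*(a) + α‖a‖ > 0 for all a ∈ A \ {0} and x*(k) + α‖k‖ < 0 for all k ∈ (−K) \ {0}. -/
open Set

variable {E : Type*} [NormedAddCommGroup E] [NormedSpace ℝ E]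

theorem stmt14 (K A : Set E) (hK : IsNontrivialCone K) (hA : IsNontrivialCone A)
    (hcomp : WeaklyCompact (closure (convBase (-K))) ∨ WeaklyCompact (closure (convBase0 A)))
    (hsep : closure (convBase0 A) ∩ closure (convBase (-K)) = ∅) :
    ∃ f : E →L[ℝ] ℝ, ∃ α : ℝ, (f, α) ∈ augWSharpCone K ∧ 0 < α ∧
      (∀ a ∈ A, a ≠ 0 → 0 < f a + α * ‖a‖) ∧
      (∀ k ∈ (-K : Set E), k ≠ 0 → f k + α * ‖k‖ < 0) := by

  classical
  set T := toWeakSpace ℝ E with hT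
  set SA := closure (convBase0 A) with hSA
  set SK := closure (convBase (-K)) with hSK
  have hconvA : Convex ℝ (convBase0 A) := convex_convexHull ℝ _
  have hconvK : Convex ℝ (convBase (-K)) := convex_convexHull ℝ _
  have hclA : (T '' SA) = closure (T '' convBase0 A) := hconvA.toWeakSpace_closure ℝ
  have hclK : (T '' SK) = closure (T '' convBase (-K)) := hconvK.toWeakSpace_closure ℝ
  have hA_closed : IsClosed (T '' SA) := hclA ▸ isClosed_closure
  have hK_closed : IsClosed (T '' SK) := hclK ▸ isClosed_closure
  have hA_conv : Convex ℝ (T '' SA) := by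
    have := (hconvA.closure).linear_image T.toLinearMap; exact this
  have hK_conv : Convex ℝ (T '' SK) := by
    have := (hconvK.closure).linear_image T.toLinearMap; exact this
  have hdisj : Disjoint (T '' SK) (T '' SA) := by
    rw [Set.disjoint_image_iff (toWeakSpace ℝ E).injective]
    rw [Set.disjoint_iff_inter_eq_empty, Set.inter_comm]
    exact hsep
  obtain ⟨f, u, v, hu, huv, hv⟩ :
      ∃ (f : WeakSpace ℝ E →L[ℝ] ℝ) (u v : ℝ),
        (∀ x ∈ T '' SK, f x < u) ∧ u < v ∧ ∀ y ∈ T '' SA, v < f y := by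
    haveI h1 : ContinuousSMul ℝ (WeakSpace ℝ E) :=
      WeakBilin.instContinuousSMul (B := (topDualPairing ℝ E).flip)
    haveI h2 : IsTopologicalAddGroup (WeakSpace ℝ E) :=
      WeakBilin.instIsTopologicalAddGroup (B := (topDualPairing ℝ E).flip)
    haveI h3 : LocallyConvexSpace ℝ (WeakSpace ℝ E) :=
      WeakBilin.locallyConvexSpace (B := (topDualPairing ℝ E).flip)
    rcases hcomp with hc | hc
    · exact geometric_hahn_banach_compact_closed hK_conv hc hA_conv hA_closed hdisj
    · exact geometric_hahn_banach_closed_compact hK_conv hK_closed hA_conv hc hdisj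
  set g : E →L[ℝ] ℝ := f.comp (toWeakSpaceCLM ℝ E) with hg
  have hgx : ∀ x : E, g x = f (T x) := fun x => rfl
  -- basic inequalities on bases
  have hvA : ∀ x ∈ convBase0 A, v < g x := fun x hx =>
    hv _ ⟨x, subset_closure hx, rfl⟩
  have huK : ∀ x ∈ convBase (-K), g x < u := fun x hx =>
    hu _ ⟨x, subset_closure hx, rfl⟩
  have hv0 : v < 0 := by
    have := hvA 0 (subset_convexHull ℝ _ (Or.inl rfl))
    simpa using this
  have hu0 : u < 0 := huv.trans hv0
  set α : ℝ := -(u + v) / 2 with hα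
  have hαpos : 0 < α := by simp [hα]; linarith
  have hαv : -v < α := by rw [hα]; linarith
  have hαu : α < -u := by rw [hα]; linarith
  -- g < u on normBase (-K)
  have hKbase : ∀ x ∈ normBase (-K), g x < u := fun x hx =>
    huK x (subset_convexHull ℝ _ hx)
  -- v < g on normBase A
  have hAbase : ∀ x ∈ normBase A, v < g x := fun x hx =>
    hvA x (subset_convexHull ℝ _ (Or.inr hx))
  -- for k ∈ K, k ≠ 0 : -u * ‖k‖ < g k
  have hKpos : ∀ k ∈ K, k ≠ 0 → -u * ‖k‖ < g k := by
    intro k hk hk0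
    have hnk : ‖k‖ ≠ 0 := norm_ne_zero_iff.mpr hk0
    have hmem : (-(‖k‖⁻¹ • k)) ∈ normBase (-K) := by
      refine ⟨?_, ?_⟩
      · rw [Set.mem_neg, neg_neg]
        exact hK.1.2 _ (inv_nonneg.mpr (norm_nonneg k)) k hk
      · rw [norm_neg, norm_smul, norm_inv, norm_norm, inv_mul_cancel₀ hnk]
    have := hKbase _ hmem
    rw [map_neg, map_smul, smul_eq_mul] at this
    have h2 : -u < ‖k‖⁻¹ * g k := by linarith
    have h3 : ‖k‖ * -u < ‖k‖ * (‖k‖⁻¹ * g k) :=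
      (mul_lt_mul_iff_right₀ (norm_pos_iff.mpr hk0)).mpr h2
    rw [← mul_assoc, mul_inv_cancel₀ hnk, one_mul] at h3
    linarith
  refine ⟨g, α, ⟨le_of_lt hαpos, ?_, ?_⟩, hαpos, ?_, ?_⟩
  · -- sharpCone
    intro k hk hk0
    have h1 := hKpos k hk hk0
    have h2 : 0 < -u * ‖k‖ := mul_pos (by linarith) (norm_pos_iff.mpr hk0)
    linarith
  · -- weak closure condition
    intro y hy
    obtain ⟨z, hz, rfl⟩ := hy
    have hsub : closure (T '' normBase K) ⊆ {w : WeakSpace ℝ E | -u ≤ f w} := by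
      apply closure_minimal
      · rintro - ⟨x, hx, rfl⟩
        have hxK : x ∈ K := hx.1
        have hx0 : x ≠ 0 := by
          intro h; rw [h] at hx; simpa using hx.2
        have := hKpos x hxK hx0
        have hnx : ‖x‖ = 1 := hx.2
        rw [hnx, mul_one] at this
        exact le_of_lt this
      · exact isClosed_le continuous_const f.continuous
    have hfz : -u ≤ f z := hsub hz
    have : g ((toWeakSpace ℝ E).symm z) = f z := by
      rw [hgx]
      congr 1
    rw [this]
    linarith
  · -- A condition
    intro a ha ha0
    have hna : ‖a‖ ≠ 0 := norm_ne_zero_iff.mpr ha0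
    have hmem : (‖a‖⁻¹ • a) ∈ normBase A := by
      refine ⟨hA.1.2 _ (inv_nonneg.mpr (norm_nonneg a)) a ha, ?_⟩
      rw [norm_smul, norm_inv, norm_norm, inv_mul_cancel₀ hna]
    have := hAbase _ hmem
    rw [map_smul, smul_eq_mul] at this
    have h2 : ‖a‖ * v < ‖a‖ * (‖a‖⁻¹ * g a) :=
      (mul_lt_mul_iff_right₀ (norm_pos_iff.mpr ha0)).mpr this
    rw [← mul_assoc, mul_inv_cancel₀ hna, one_mul] at h2
    have h3 : 0 < (v + α) * ‖a‖ := mul_pos (by linarith) (norm_pos_iff.mpr ha0)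
    nlinarith
  · -- -K condition
    intro k hk hk0
    have hnk : ‖k‖ ≠ 0 := norm_ne_zero_iff.mpr hk0
    have hmem : (‖k‖⁻¹ • k) ∈ normBase (-K) := by
      refine ⟨?_, ?_⟩
      · rw [Set.mem_neg, ← smul_neg]
        exact hK.1.2 _ (inv_nonneg.mpr (norm_nonneg k)) (-k) (Set.mem_neg.mp hk)
      · rw [norm_smul, norm_inv, norm_norm, inv_mul_cancel₀ hnk]
    have := hKbase _ hmem
    rw [map_smul, smul_eq_mul] at this
    have h2 : ‖k‖ * (‖k‖⁻¹ * g k) < ‖k‖ * u :=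
      (mul_lt_mul_iff_right₀ (norm_pos_iff.mpr hk0)).mpr this
    rw [← mul_assoc, mul_inv_cancel₀ hnk, one_mul] at h2
    have h3 : (u + α) * ‖k‖ < 0 := by
      apply mul_neg_of_neg_of_pos (by linarith) (norm_pos_iff.mpr hk0)
    nlinarith
end

section
/- Let E be a real normed space, K ⊆ E a nontrivial cone with norm-base B_K, and A ⊆ E a nontrivial cone with norm-base B_A. Then the following are equivalent: (1) there exists (x*, α) ∈ cor K^{a+} such that x*(a) + α‖a‖ > 0 for all a ∈ A \ {0} and x*(k) + α‖k‖ < 0 for all k ∈ (−K) \ {0}; (2) there exists (x*, α) ∈ cor K^{a+} such that x*(a) + α‖a‖ > 0 for all a ∈ (cl A) \ {0} and x*(k) + α‖k‖ < 0 for all k ∈ (−cl(conv K)) \ {0}; (3) there exist real numbers δ₂ > δ₁ > 0 and x* ∈ E* such that for every α ∈ (δ₁, δ₂) one has (x*, α) ∈ cor K^{a+}, x*(a) + α‖a‖ > 0 for all a ∈ (cl A) \ {0}, and x*(k) + α‖k‖ < 0 for all k ∈ (−cl(conv K)) \ {0}; (4) there exist real numbers δ₂ > δ₁ > 0 and x*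 ∈ E* such that for every α ∈ (δ₁, δ₂) one has (x*, α) ∈ K^{a#}, x*(a) + α‖a‖ > 0 for all a ∈ (cl A) \ {0}, and x*(k) + α‖k‖ < 0 for all k ∈ (−cl(conv K)) \ {0}. -/
open Set

variable {E : Type*} [NormedAddCommGroup E] [NormedSpace ℝ E]

lemma aux_ext (f : E →L[ℝ] ℝ) (c : ℝ) (hc : 0 ≤ c) (K : Set E)
    (h : ∀ y ∈ K, c * ‖y‖ ≤ f y) : ∀ y ∈ closure (convexHull ℝ K), c * ‖y‖ ≤ f y := by
  have hconvex : Convex ℝ {y : E | c * ‖y‖ ≤ f y} := by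
    intro x hx y hy a b ha hb hab
    simp only [mem_setOf_eq] at *
    have hn : ‖a • x + b • y‖ ≤ a * ‖x‖ + b * ‖y‖ := by
      calc ‖a • x + b • y‖ ≤ ‖a • x‖ + ‖b • y‖ := norm_add_le _ _
        _ = a * ‖x‖ + b * ‖y‖ := by
            rw [norm_smul, norm_smul, Real.norm_of_nonneg ha, Real.norm_of_nonneg hb]
    have := mul_le_mul_of_nonneg_left hn hc
    have hmap : f (a • x + b • y) = a * f x + b * f y := by simp
    rw [hmap]; nlinarith
  have hclosed : IsClosed {y : E | c * ‖y‖ ≤ f y} :=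
    isClosed_le (by continuity) f.continuous
  intro y hy
  exact closure_minimal (convexHull_min h hconvex) hclosed hy

set_option maxHeartbeats 1000000 in
theorem stmt16 (K A : Set E) (hK : IsNontrivialCone K) (hA : IsNontrivialCone A) :
    List.TFAE [
      (∃ f : E →L[ℝ] ℝ, ∃ α : ℝ, (f, α) ∈ core (augDualCone K) ∧
        (∀ a ∈ A, a ≠ 0 → 0 < f a + α * ‖a‖) ∧
        (∀ k ∈ (-K : Set E), k ≠ 0 → f k + α * ‖k‖ < 0)),
      (∃ f : E →L[ℝ] ℝ, ∃ α : ℝ, (f, α) ∈ core (augDualCone K) ∧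
        (∀ a ∈ closure A, a ≠ 0 → 0 < f a + α * ‖a‖) ∧
        (∀ k ∈ -(closure (convexHull ℝ K)), k ≠ 0 → f k + α * ‖k‖ < 0)),
      (∃ δ₁ δ₂ : ℝ, 0 < δ₁ ∧ δ₁ < δ₂ ∧ ∃ f : E →L[ℝ] ℝ, ∀ α ∈ Set.Ioo δ₁ δ₂,
        (f, α) ∈ core (augDualCone K) ∧
        (∀ a ∈ closure A, a ≠ 0 → 0 < f a + α * ‖a‖) ∧
        (∀ k ∈ -(closure (convexHull ℝ K)), k ≠ 0 → f k + α * ‖k‖ < 0)),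
      (∃ δ₁ δ₂ : ℝ, 0 < δ₁ ∧ δ₁ < δ₂ ∧ ∃ f : E →L[ℝ] ℝ, ∀ α ∈ Set.Ioo δ₁ δ₂,
        (f, α) ∈ augSharpCone K ∧
        (∀ a ∈ closure A, a ≠ 0 → 0 < f a + α * ‖a‖) ∧
        (∀ k ∈ -(closure (convexHull ℝ K)), k ≠ 0 → f k + α * ‖k‖ < 0))] := by
  tfae_have 2 → 1 := by
    rintro ⟨f, α, hcore, hA2, hK2⟩
    refine ⟨f, α, hcore, fun a ha ha0 => hA2 a (subset_closure ha) ha0, fun k hk hk0 => ?_⟩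
    refine hK2 k ?_ hk0
    exact Set.mem_neg.mpr (subset_closure (subset_convexHull ℝ K (Set.mem_neg.mp hk)))
  tfae_have 3 → 2 := by
    rintro ⟨δ₁, δ₂, h1, h2, f, h⟩
    exact ⟨f, (δ₁ + δ₂) / 2, h _ ⟨by linarith, by linarith⟩⟩
  tfae_have 4 → 3 := by
    rintro ⟨δ₁, δ₂, h1, h2, f, h⟩
    refine ⟨δ₁, (δ₁ + δ₂) / 2, h1, by linarith, f, fun α hα => ?_⟩
    have hαm : α ∈ Set.Ioo δ₁ δ₂ := ⟨hα.1, by linarith [hα.2]⟩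
    obtain ⟨hsharp, hAcond, hKcond⟩ := h α hαm
    set α' := (α + δ₂) / 2 with hα'def
    have hαα' : α < α' := by simp only [hα'def]; linarith [hαm.2]
    have hα'mem : α' ∈ Set.Ioo δ₁ δ₂ := ⟨by linarith [hαm.1], by linarith [hαm.2]⟩
    obtain ⟨hα'0, hsh', hpos'⟩ := (h α' hα'mem).1
    have hge : ∀ y ∈ K, α' * ‖y‖ ≤ f y := by
      intro y hy
      rcases eq_or_ne y 0 with rfl | hy0
      · simp
      · linarith [hpos' y hy hy0]
    have hα0 : 0 < α := lt_trans h1 hα.1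
    refine ⟨⟨⟨le_of_lt hα0, fun y hy => ?_⟩, ?_⟩, hAcond, hKcond⟩
    · have := hge y hy; nlinarith [norm_nonneg y]
    · rintro ⟨g, β⟩
      have hd0 : (0:ℝ) < α' - α := by linarith
      have hX : (0:ℝ) < ‖g‖ + |β| + 1 := by positivity
      have hY : (0:ℝ) < |β| + 1 := by positivity
      refine ⟨min ((α' - α) / (‖g‖ + |β| + 1)) (α / (|β| + 1)),
        lt_min (by positivity) (by positivity), fun t ht => ?_⟩
      obtain ⟨ht0, htε⟩ := ht
      have ht1 : t * (‖g‖ + |β| + 1) ≤ α' - α :=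
        (le_div_iff₀ hX).mp (le_trans htε (min_le_left _ _))
      have ht2 : t * (|β| + 1) ≤ α :=
        (le_div_iff₀ hY).mp (le_trans htε (min_le_right _ _))
      simp only [Prod.smul_mk, Prod.mk_add_mk, smul_eq_mul, augDualCone, mem_setOf_eq]
      constructor
      · have : t * (-β) ≤ t * |β| := mul_le_mul_of_nonneg_left (neg_le_abs β) ht0
        nlinarith
      · intro y hy
        have hgy : |g y| ≤ ‖g‖ * ‖y‖ := by
          have := g.le_opNorm y
          rwa [Real.norm_eq_abs] at this
        have h1' := hge y hy
        have h2' := neg_abs_le (g y)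
        have h3' := le_abs_self (g y)
        have hny := norm_nonneg y
        have hb1 : t * (-β) ≤ t * |β| := mul_le_mul_of_nonneg_left (neg_le_abs β) ht0
        have hb2 : t * β ≤ t * |β| := mul_le_mul_of_nonneg_left (le_abs_self β) ht0
        simp only [ContinuousLinearMap.add_apply, ContinuousLinearMap.coe_smul',
          Pi.smul_apply, smul_eq_mul]
        nlinarith [mul_le_mul_of_nonneg_left hgy ht0, abs_nonneg (g y),
          mul_le_mul_of_nonneg_right ht1 hny, mul_le_mul_of_nonneg_right hb2 hny,
          mul_nonneg ht0 (abs_nonneg β), abs_nonneg β, norm_nonneg g]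
  tfae_have 1 → 4 := by
    rintro ⟨f, α, hcore, hA1, hK1⟩
    simp only [core, augDualCone, mem_setOf_eq] at hcore
    obtain ⟨⟨hα0, hfK⟩, hdir⟩ := hcore
    obtain ⟨ε, hε, hεt⟩ := hdir ((0 : E →L[ℝ] ℝ), (1 : ℝ))
    have key := hεt ε ⟨le_of_lt hε, le_refl ε⟩
    simp only [Prod.smul_mk, smul_zero, Prod.mk_add_mk, smul_eq_mul, mul_one,
      ContinuousLinearMap.add_apply, ContinuousLinearMap.zero_apply, add_zero] at key
    have hge : ∀ y ∈ K, (α + ε) * ‖y‖ ≤ f y := by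
      intro y hy
      have := key.2 y hy
      linarith
    have hcl := aux_ext f (α + ε) (by linarith) K hge
    have hclA : ∀ a ∈ closure A, 0 ≤ f a + α * ‖a‖ := by
      have hsub : A ⊆ {x : E | 0 ≤ f x + α * ‖x‖} := by
        intro a ha
        rcases eq_or_ne a 0 with rfl | h0
        · simp
        · exact le_of_lt (hA1 a ha h0)
      intro a ha
      exact closure_minimal hsub (isClosed_le continuous_const (f.continuous.add (continuous_const.mul continuous_norm))) ha
    refine ⟨α + ε / 2, α + ε, by linarith, by linarith, f, fun α' hα' => ?_⟩
    obtain ⟨h1', h2'⟩ := hα'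
    refine ⟨⟨by linarith, fun y hy hy0 => ?_, fun y hy hy0 => ?_⟩,
      fun a ha ha0 => ?_, fun k hk hk0 => ?_⟩
    · have := hge y hy; have hny : 0 < ‖y‖ := norm_pos_iff.mpr hy0; nlinarith
    · have := hge y hy; have hny : 0 < ‖y‖ := norm_pos_iff.mpr hy0; nlinarith
    · have := hclA a ha; have hna : 0 < ‖a‖ := norm_pos_iff.mpr ha0; nlinarith
    · have hk' : -k ∈ closure (convexHull ℝ K) := Set.mem_neg.mp hk
      have := hcl (-k) hk'
      have hnk : 0 < ‖k‖ := norm_pos_iff.mpr hk0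
      rw [map_neg, norm_neg] at this
      nlinarith
  tfae_finish
end

section
/- Let E be a real normed space, K ⊆ E a nontrivial cone with norm-base B_K, and A ⊆ E a nontrivial cone with norm-base B_A. Assume that cl S_{−K} is weakly compact. Then the following are equivalent: (1) cl(conv({0} ∪ (bd A ∩ {x | ‖x‖ = 1}))) ∩ cl S_{−K} = ∅, where bd A is the topological boundary of A; (2) there exists (x*, α) ∈ K^{aw#} with α > 0 such that x*(a) + α‖a‖ > 0 for all a ∈ (bd A) \ {0} and x*(k) + α‖k‖ < 0 for all k ∈ (−K) \ {0}; (3) there exists (x*, α) ∈ K^{aw#} such that x*(a) + α‖a‖ > 0 for all a ∈ (bd A) \ {0} and x*(k) + α‖k‖ < 0 for all k ∈ (−K) \ {0}. -/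
open Set

variable {E : Type*} [NormedAddCommGroup E] [NormedSpace ℝ E]

section AuxStmt19

open Pointwise

noncomputable instance inst_s19 : LocallyConvexSpace ℝ (WeakSpace ℝ E) :=
  WeakBilin.locallyConvexSpace (B := (topDualPairing ℝ E).flip)

noncomputable instance inst_s19_2 : ContinuousSMul ℝ (WeakSpace ℝ E) :=
  WeakBilin.instContinuousSMul (B := (topDualPairing ℝ E).flip)

theorem aux_normBase_neg (K : Set E) : normBase (-K) = -(normBase K) := by
  ext x
  simp [normBase, Set.mem_neg]

theorem aux_neg_cone {K : Set E} (h : IsCone K) : IsCone (-K) := by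
  refine ⟨by simpa using h.1, fun t ht x hx => ?_⟩
  have : t • (-x) ∈ K := h.2 t ht (-x) hx
  simpa [Set.mem_neg, smul_neg] using this

theorem aux_mem_normBase {K : Set E} (hK : IsCone K) {x : E} (hx : x ∈ K) (hx0 : x ≠ 0) :
    ‖x‖⁻¹ • x ∈ normBase K := by
  have hn : ‖x‖ ≠ 0 := norm_ne_zero_iff.mpr hx0
  exact ⟨hK.2 _ (inv_nonneg.mpr (norm_nonneg _)) _ hx,
    by rw [norm_smul, norm_inv, norm_norm, inv_mul_cancel₀ hn]⟩

theorem aux_smul_cone_eq {A : Set E} (hA : IsCone A) {t : ℝ} (ht : 0 < t) : t • A = A := by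
  apply subset_antisymm
  · rintro _ ⟨x, hx, rfl⟩
    exact hA.2 t ht.le x hx
  · intro x hx
    refine ⟨t⁻¹ • x, hA.2 t⁻¹ (inv_pos.mpr ht).le x hx, ?_⟩
    show t • t⁻¹ • x = x
    rw [smul_smul, mul_inv_cancel₀ ht.ne', one_smul]

theorem aux_frontier_smul {A : Set E} (hA : IsCone A) {t : ℝ} (ht : 0 < t)
    {a : E} (ha : a ∈ frontier A) : t • a ∈ frontier A := by
  obtain ⟨hc, hi⟩ := ha
  constructor
  · have : t • a ∈ closure (t • A) := by
      rw [closure_smul₀' ht.ne']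
      exact Set.smul_mem_smul_set hc
    rwa [aux_smul_cone_eq hA ht] at this
  · intro hint
    apply hi
    rw [← aux_smul_cone_eq hA ht, interior_smul₀ ht.ne'] at hint
    exact (Set.smul_mem_smul_set_iff₀ ht.ne' _ _).mp hint

theorem aux_mem_wClosure {S : Set E} {y : E} :
    y ∈ wClosure S ↔ toWeakSpace ℝ E y ∈ closure (toWeakSpace ℝ E '' S) := by
  constructor
  · rintro ⟨w, hw, rfl⟩
    rwa [LinearEquiv.apply_symm_apply]
  · intro h
    exact ⟨toWeakSpace ℝ E y, h, (toWeakSpace ℝ E).symm_apply_apply y⟩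

theorem aux_wClosure_neg {S : Set E} {y : E} (h : y ∈ wClosure S) : -y ∈ wClosure (-S) := by
  rw [aux_mem_wClosure] at h ⊢
  rw [map_neg]
  have h1 : -toWeakSpace ℝ E y ∈ (fun z : WeakSpace ℝ E => -z) '' closure (toWeakSpace ℝ E '' S) :=
    ⟨_, h, rfl⟩
  have h2 := (continuous_neg (G := WeakSpace ℝ E)).continuousOn.image_closure
    (s := toWeakSpace ℝ E '' S) h1
  refine closure_mono ?_ h2
  rintro _ ⟨_, ⟨x, hx, rfl⟩, rfl⟩
  exact ⟨-x, Set.neg_mem_neg.mpr hx, map_neg _ x⟩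

theorem aux_convex_le (f : E →L[ℝ] ℝ) (r : ℝ) : Convex ℝ {z : E | f z ≤ r} := by
  intro x hx y hy a b ha hb hab
  simp only [Set.mem_setOf_eq, map_add, map_smul, smul_eq_mul] at *
  have h1 := mul_le_mul_of_nonneg_left hx ha
  have h2 := mul_le_mul_of_nonneg_left hy hb
  have hr : a * r + b * r = r := by rw [← add_mul, hab, one_mul]
  linarith

theorem aux_convex_ge (f : E →L[ℝ] ℝ) (r : ℝ) : Convex ℝ {z : E | r ≤ f z} := by
  intro x hx y hy a b ha hb hab
  simp only [Set.mem_setOf_eq, map_add, map_smul, smul_eq_mul] at *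
  have h1 := mul_le_mul_of_nonneg_left hx ha
  have h2 := mul_le_mul_of_nonneg_left hy hb
  have hr : a * r + b * r = r := by rw [← add_mul, hab, one_mul]
  linarith

end AuxStmt19

theorem stmt19 (K A : Set E) (hK : IsNontrivialCone K) (hA : IsNontrivialCone A)
    (hcomp : WeaklyCompact (closure (convBase (-K)))) :
    List.TFAE [
      closure (convexHull ℝ ({0} ∪ (frontier A ∩ {x : E | ‖x‖ = 1}))) ∩
        closure (convBase (-K)) = ∅,
      (∃ f : E →L[ℝ] ℝ, ∃ α : ℝ, (f, α) ∈ augWSharpCone K ∧ 0 < α ∧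
        (∀ a ∈ frontier A, a ≠ 0 → 0 < f a + α * ‖a‖) ∧
        (∀ k ∈ (-K : Set E), k ≠ 0 → f k + α * ‖k‖ < 0)),
      (∃ f : E →L[ℝ] ℝ, ∃ α : ℝ, (f, α) ∈ augWSharpCone K ∧
        (∀ a ∈ frontier A, a ≠ 0 → 0 < f a + α * ‖a‖) ∧
        (∀ k ∈ (-K : Set E), k ≠ 0 → f k + α * ‖k‖ < 0))] := by
  have hKcone := hK.1
  obtain ⟨x₀, hx₀K, hx₀0⟩ : ∃ x ∈ K, x ≠ 0 := by
    by_contra h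
    push_neg at h
    exact hK.2.1 (Set.eq_singleton_iff_unique_mem.mpr ⟨hKcone.1, fun y hy => h y hy⟩)
  have hu : -(‖x₀‖⁻¹ • x₀) ∈ normBase (-K) := by
    rw [aux_normBase_neg]
    exact Set.neg_mem_neg.mpr (aux_mem_normBase hKcone hx₀K hx₀0)
  have hconv₂ : Convex ℝ (convBase (-K)) := convex_convexHull ℝ _
  have hC₂eq : toWeakSpace ℝ E '' closure (convBase (-K))
      = closure (toWeakSpace ℝ E '' convBase (-K)) := hconv₂.toWeakSpace_closure ℝ
  have hC₂closed : IsClosed (toWeakSpace ℝ E '' closure (convBase (-K))) := by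
    rw [hC₂eq]; exact isClosed_closure
  have hBsub : normBase (-K) ⊆ closure (convBase (-K)) :=
    (subset_convexHull ℝ _).trans subset_closure
  have hmax : ∀ f : E →L[ℝ] ℝ, ∃ y₀ ∈ wClosure (normBase (-K)),
      ∀ x ∈ closure (convBase (-K)), f x ≤ f y₀ := by
    intro f
    have hTbsub : closure (toWeakSpace ℝ E '' normBase (-K))
        ⊆ toWeakSpace ℝ E '' closure (convBase (-K)) :=
      closure_minimal (Set.image_mono hBsub) hC₂closed
    have hTbcomp : IsCompact (closure (toWeakSpace ℝ E '' normBase (-K))) :=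
      hcomp.of_isClosed_subset isClosed_closure hTbsub
    have hTbne : (closure (toWeakSpace ℝ E '' normBase (-K))).Nonempty :=
      ⟨toWeakSpace ℝ E (-(‖x₀‖⁻¹ • x₀)), subset_closure (Set.mem_image_of_mem _ hu)⟩
    have hFc : Continuous fun w : WeakSpace ℝ E => f ((toWeakSpace ℝ E).symm w) :=
      WeakBilin.eval_continuous ((topDualPairing ℝ E).flip) f
    obtain ⟨w₀, hw₀, hmaxon⟩ := hTbcomp.exists_isMaxOn hTbne hFc.continuousOn
    refine ⟨(toWeakSpace ℝ E).symm w₀, ⟨w₀, hw₀, rfl⟩, ?_⟩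
    intro x hx
    have hBle : ∀ b ∈ normBase (-K), f b ≤ f ((toWeakSpace ℝ E).symm w₀) := by
      intro b hb
      have := hmaxon (subset_closure (Set.mem_image_of_mem _ hb))
      simpa using this
    exact closure_minimal (convexHull_min hBle (aux_convex_le f _))
      (isClosed_le f.continuous continuous_const) hx
  tfae_have 1 → 2 := by
    intro h1
    have hconv₁ : Convex ℝ (convexHull ℝ ({0} ∪ (frontier A ∩ {x : E | ‖x‖ = 1}))) :=
      convex_convexHull ℝ _
    have hdisj : Disjoint
        (toWeakSpace ℝ E '' closure (convexHull ℝ ({0} ∪ (frontier A ∩ {x : E | ‖x‖ = 1}))))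
        (toWeakSpace ℝ E '' closure (convBase (-K))) :=
      (Set.disjoint_image_iff (toWeakSpace ℝ E).injective).mpr
        (Set.disjoint_iff_inter_eq_empty.mpr h1)
    have hC₁closed : IsClosed (toWeakSpace ℝ E ''
        closure (convexHull ℝ ({0} ∪ (frontier A ∩ {x : E | ‖x‖ = 1})))) := by
      rw [hconv₁.toWeakSpace_closure ℝ]; exact isClosed_closure
    obtain ⟨g, u, v, hgu, huv, hgv⟩ := geometric_hahn_banach_closed_compact
      (hconv₁.closure.linear_image (toWeakSpace ℝ E).toLinearMap) hC₁closed
      (hconv₂.closure.linear_image (toWeakSpace ℝ E).toLinearMap) hcomp hdisj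
    set f₀ : E →L[ℝ] ℝ := g.comp (toWeakSpaceCLM ℝ E) with hf₀
    have hmemC₁ : ∀ z ∈ closure (convexHull ℝ ({0} ∪ (frontier A ∩ {x : E | ‖x‖ = 1}))),
        f₀ z < u := fun z hz => hgu _ (Set.mem_image_of_mem _ hz)
    have hmemC₂ : ∀ z ∈ closure (convBase (-K)), v < f₀ z :=
      fun z hz => hgv _ (Set.mem_image_of_mem _ hz)
    have h0C₁ : (0 : E) ∈ closure (convexHull ℝ ({0} ∪ (frontier A ∩ {x : E | ‖x‖ = 1}))) :=
      subset_closure (subset_convexHull ℝ _ (Or.inl rfl))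
    have hupos : 0 < u := by have := hmemC₁ 0 h0C₁; simpa using this
    refine ⟨-f₀, u, ⟨hupos.le, ?_, ?_⟩, hupos, ?_, ?_⟩
    · intro k hkK hk0
      have hn : 0 < ‖k‖ := norm_pos_iff.mpr hk0
      have hneg : -(‖k‖⁻¹ • k) ∈ normBase (-K) := by
        rw [aux_normBase_neg]
        exact Set.neg_mem_neg.mpr (aux_mem_normBase hKcone hkK hk0)
      have hv := hmemC₂ _ (hBsub hneg)
      rw [map_neg, map_smul, smul_eq_mul] at hv
      rw [ContinuousLinearMap.neg_apply]
      have h2 : 0 < ‖k‖⁻¹ * -(f₀ k) := by rw [mul_neg]; linarith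
      have h3 := mul_pos hn h2
      rwa [← mul_assoc, mul_inv_cancel₀ hn.ne', one_mul] at h3
    · intro y hy
      have hy' : -y ∈ wClosure (normBase (-K)) := by
        have := aux_wClosure_neg hy
        rwa [← aux_normBase_neg] at this
      have hmem : toWeakSpace ℝ E (-y) ∈ toWeakSpace ℝ E '' closure (convBase (-K)) :=
        closure_minimal (Set.image_mono hBsub) hC₂closed (aux_mem_wClosure.mp hy')
      obtain ⟨z, hz, hzeq⟩ := hmem
      have hz' : z = -y := (toWeakSpace ℝ E).injective hzeq
      rw [hz'] at hz
      have hv := hmemC₂ _ hz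
      rw [map_neg] at hv
      show u < (-f₀) y
      rw [ContinuousLinearMap.neg_apply]
      linarith
    · intro a ha ha0
      have hn : 0 < ‖a‖ := norm_pos_iff.mpr ha0
      have hfr : ‖a‖⁻¹ • a ∈ frontier A := aux_frontier_smul hA.1 (inv_pos.mpr hn) ha
      have hnorm : ‖(‖a‖⁻¹ • a : E)‖ = 1 := by
        rw [norm_smul, norm_inv, norm_norm, inv_mul_cancel₀ hn.ne']
      have hmem : ‖a‖⁻¹ • a ∈ closure (convexHull ℝ ({0} ∪ (frontier A ∩ {x : E | ‖x‖ = 1}))) :=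
        subset_closure (subset_convexHull ℝ _ (Or.inr ⟨hfr, hnorm⟩))
      have hlt := hmemC₁ _ hmem
      rw [map_smul, smul_eq_mul] at hlt
      simp only [ContinuousLinearMap.neg_apply]
      have h3 := mul_lt_mul_of_pos_left hlt hn
      rw [← mul_assoc, mul_inv_cancel₀ hn.ne', one_mul] at h3
      nlinarith
    · intro k hkK hk0
      have hn : 0 < ‖k‖ := norm_pos_iff.mpr hk0
      have hmem : ‖k‖⁻¹ • k ∈ normBase (-K) :=
        aux_mem_normBase (aux_neg_cone hKcone) hkK hk0
      have hv := hmemC₂ _ (hBsub hmem)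
      rw [map_smul, smul_eq_mul] at hv
      simp only [ContinuousLinearMap.neg_apply]
      have h3 := mul_lt_mul_of_pos_left hv hn
      rw [← mul_assoc, mul_inv_cancel₀ hn.ne', one_mul] at h3
      nlinarith [mul_lt_mul_of_pos_left huv hn]
  tfae_have 2 → 3 := by
    rintro ⟨f, α, hmem, -, hfa, hfk⟩
    exact ⟨f, α, hmem, hfa, hfk⟩
  tfae_have 3 → 1 := by
    rintro ⟨f, α, ⟨hα0, hsharp, hw⟩, hfa, hfk⟩
    obtain ⟨y₀, hy₀, hmaxf⟩ := hmax f
    have hy₀' : -y₀ ∈ wClosure (normBase K) := by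
      have := aux_wClosure_neg hy₀
      rwa [aux_normBase_neg, neg_neg] at this
    have h₁ := hw _ hy₀'
    rw [map_neg] at h₁
    rw [Set.eq_empty_iff_forall_notMem]
    rintro x ⟨hx1, hx2⟩
    have hxge : -α ≤ f x := by
      have hgen : ({0} ∪ (frontier A ∩ {x : E | ‖x‖ = 1})) ⊆ {z : E | -α ≤ f z} := by
        rintro z (rfl | ⟨hzf, hz1⟩)
        · simp only [Set.mem_setOf_eq, map_zero]
          linarith
        · have hz1' : ‖z‖ = 1 := hz1
          have hz0 : z ≠ 0 := by
            intro h
            rw [h] at hz1'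
            simp at hz1'
          have h2 := hfa z hzf hz0
          rw [hz1', mul_one] at h2
          simp only [Set.mem_setOf_eq]
          linarith
      exact closure_minimal (convexHull_min hgen (aux_convex_ge f _))
        (isClosed_le continuous_const f.continuous) hx1
    have hxle := hmaxf x hx2
    linarith
  tfae_finish
end
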